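/- arXiv:2507.03982 — 7 statements merged into one kernel-verified Lean document; each statement's English description precedes it below -/
import Mathlib

section
/- Let (X, f) be a dynamical system, where X is a compact uniform space and f : X → X is a continuous surjection. If f has topological shadowing, then the set of non-wandering points equals the set of chain recurrent points: Ω(f) = CR(f). -/
open Filter Set Function

section Defs

variable {X : Type*} [UniformSpace X]

/-- A `D`-chain from `x` to `y`: a finite sequence `x = c 0, c 1, …, c n` (`n ≥ 1`)
with `c n = y` and `(f (c i), c (i+1)) ∈ D` for all `i < n`. -/
def DChain (f : X → X) (D : Set (X × X)) (x y : X) : Prop :=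
  ∃ n : ℕ, 1 ≤ n ∧ ∃ c : ℕ → X, c 0 = x ∧ c n = y ∧ ∀ i < n, (f (c i), c (i + 1)) ∈ D

/-- A `D`-chain from `x` to `y` contained in the set `S`. -/
def DChainIn (f : X → X) (D : Set (X × X)) (S : Set X) (x y : X) : Prop :=
  ∃ n : ℕ, 1 ≤ n ∧ ∃ c : ℕ → X, c 0 = x ∧ c n = y ∧ (∀ i ≤ n, c i ∈ S) ∧
    ∀ i < n, (f (c i), c (i + 1)) ∈ D

/-- The set of chain-recurrent points of `f`. -/
def CR (f : X → X) : Set X :=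
  {x | ∀ D ∈ uniformity X, DChain f D x x}

/-- The set of non-wandering points of `f`. -/
def NonWandering (f : X → X) : Set X :=
  {x | ∀ U : Set X, IsOpen U → x ∈ U → ∃ n : ℕ, 1 ≤ n ∧ (f^[n] '' U ∩ U).Nonempty}

/-- `(x i)` is a `D`-pseudo orbit on the set `A ⊆ ℕ`. -/
def PseudoOrbitOn (f : X → X) (D : Set (X × X)) (x : ℕ → X) (A : Set ℕ) : Prop :=
  ∀ i ∈ A, (f (x i), x (i + 1)) ∈ D

/-- `(x i)` is `E`-traced by `y` on the set `B ⊆ ℕ`. -/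
def TracedOn (f : X → X) (E : Set (X × X)) (x : ℕ → X) (y : X) (B : Set ℕ) : Prop :=
  ∀ i ∈ B, (f^[i] y, x i) ∈ E

/-- Topological shadowing. -/
def TopShadowing (f : X → X) : Prop :=
  ∀ E ∈ uniformity X, ∃ D ∈ uniformity X,
    ∀ x : ℕ → X, PseudoOrbitOn f D x Set.univ → ∃ y : X, TracedOn f E x y Set.univ

/-- Topological `(F, G)`-shadowing for families `F`, `G` of subsets of `ℕ`. -/
def FGShadowing (f : X → X) (F G : Set (Set ℕ)) : Prop :=
  ∀ E ∈ uniformity X, ∃ D ∈ uniformity X,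
    ∀ x : ℕ → X, (∃ A ∈ F, PseudoOrbitOn f D x A) →
      ∃ y : X, ∃ B ∈ G, TracedOn f E x y B

end Defs

/-- A set `A ⊆ ℕ` is syndetic: gaps are bounded. -/
def Syndetic (A : Set ℕ) : Prop :=
  ∃ M : ℕ, ∀ k : ℕ, ∃ j ∈ A, k ≤ j ∧ j ≤ k + M

/-- A set `A ⊆ ℕ` is thick: contains arbitrarily long blocks of consecutive numbers. -/
def Thick (A : Set ℕ) : Prop :=
  ∀ n : ℕ, ∃ k : ℕ, ∀ i < n, k + i ∈ A

/-- A set `A ⊆ ℕ` is thickly syndetic. -/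
def ThicklySyndetic (A : Set ℕ) : Prop :=
  ∀ n : ℕ, Syndetic {k : ℕ | ∀ i < n, k + i ∈ A}

/-- A set `A ⊆ ℕ` is piecewise syndetic. -/
def PiecewiseSyndetic (A : Set ℕ) : Prop :=
  ∃ T S : Set ℕ, Thick T ∧ Syndetic S ∧ A = T ∩ S

/-- The family of thick subsets of `ℕ`. -/
def thickFamily : Set (Set ℕ) := {A | Thick A}

/-- The family of piecewise syndetic subsets of `ℕ`. -/
def psFamily : Set (Set ℕ) := {A | PiecewiseSyndetic A}

open scoped Classical in
/-- The lower density of a subset of `ℕ`. -/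
noncomputable def lowerDensity (A : Set ℕ) : ℝ :=
  Filter.atTop.liminf fun n : ℕ => ((Finset.range n).filter (· ∈ A)).card / (n : ℝ)

/-- The family of subsets of `ℕ` of lower density `1`. -/
noncomputable def densityOneFamily : Set (Set ℕ) := {A | lowerDensity A = 1}

section Dyn

variable {X : Type*} [UniformSpace X]

/-- `x` is a minimal point of `f`. -/
def MinimalPt (f : X → X) (x : X) : Prop :=
  ∀ U : Set X, IsOpen U → x ∈ U → Syndetic {n : ℕ | f^[n] x ∈ U}

/-- `(x, y)` is a syndetically proximal pair for `f`. -/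
def SyndProx (f : X → X) (x y : X) : Prop :=
  ∀ E ∈ uniformity X, Syndetic {n : ℕ | (f^[n] x, f^[n] y) ∈ E}

end Dyn

/-- with topological shadowing, Ω(f) = CR(f). -/
theorem nonWandering_eq_chainRecurrent_of_shadowing
    {X : Type*} [UniformSpace X] [CompactSpace X]
    (f : X → X) (hf : Continuous f) (hsurj : Function.Surjective f)
    (hsh : TopShadowing f) :
    NonWandering f = CR f := by
  ext x
  constructor
  · -- Non-wandering ⊆ chain recurrent (no shadowing needed)
    intro hx D hD
    obtain ⟨W, hW, hWD⟩ := comp_mem_uniformity_sets hD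
    obtain ⟨V, ⟨hV, hVo, hVs⟩, hVW⟩ := (uniformity_hasBasis_open_symmetric.mem_iff.mp hW)
    have hVD : V ⊆ D := fun p hp =>
      hWD ⟨p.1, refl_mem_uniformity hW, by simpa using hVW hp⟩
    set U : Set X := f ⁻¹' (UniformSpace.ball (f x) V) ∩ UniformSpace.ball x V with hU
    have hUopen : IsOpen U :=
      ((UniformSpace.isOpen_ball _ hVo).preimage hf).inter (UniformSpace.isOpen_ball _ hVo)
    have hxU : x ∈ U :=
      ⟨UniformSpace.mem_ball_self _ hV, UniformSpace.mem_ball_self _ hV⟩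
    obtain ⟨n, hn, w, ⟨z, hzU, rfl⟩, hwU⟩ := hx U hUopen hxU
    set c : ℕ → X := fun i => if i = 0 ∨ n ≤ i then x else f^[i] z with hc
    have e0 : c 0 = x := by simp [hc]
    have en : c n = x := by simp [hc]
    have emid : ∀ j, 0 < j → j < n → c j = f^[j] z := by
      intro j h1 h2
      simp only [hc]
      rw [if_neg (by omega)]
    refine ⟨n, hn, c, e0, en, ?_⟩
    intro i hi
    rcases Nat.eq_zero_or_pos i with hi0 | hi1
    · subst hi0
      rw [e0]
      rcases Nat.lt_or_ge 1 n with hn1 | hn1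
      · rw [emid 1 one_pos hn1]
        simpa using hVD hzU.1
      · -- n = 1 : compose two V-steps
        have hn1' : n = 1 := by omega
        rw [show (0:ℕ) + 1 = n by omega, en]
        refine hWD ⟨f z, hVW hzU.1, ?_⟩
        have h2 : f^[n] z ∈ UniformSpace.ball x V := hwU.2
        rw [hn1'] at h2
        exact hVW ((haveI := hVs; SetRel.comm V).mp (by simpa [UniformSpace.ball] using h2))
    · rw [emid i hi1 hi]
      rcases Nat.lt_or_ge (i + 1) n with h2 | h2
      · rw [emid (i+1) (by omega) h2, ← Function.iterate_succ_apply' f i z]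
        exact refl_mem_uniformity hD
      · -- i + 1 = n
        have hin : i + 1 = n := by omega
        rw [hin, en]
        have h3 : f^[n] z ∈ UniformSpace.ball x V := hwU.2
        rw [← hin, Function.iterate_succ_apply'] at h3
        exact hVD ((haveI := hVs; SetRel.comm V).mp h3)
  · -- Chain recurrent ⊆ non-wandering, using shadowing
    intro hx U hUopen hxU
    obtain ⟨E, hE, hEU⟩ := (isOpen_iff_ball_subset.mp hUopen) x hxU
    set E' := SetRel.symmetrize E with hE'
    have hE'mem : E' ∈ uniformity X := symmetrize_mem_uniformity hE
    have hE'sym : SetRel.IsSymm E' := by rw [hE']; infer_instance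
    have hE'E : E' ⊆ E := SetRel.symmetrize_subset_self (R := E)
    obtain ⟨D, hD, hsh'⟩ := hsh E' hE'mem
    obtain ⟨n, hn, c, hc0, hcn, hcchain⟩ := hx D hD
    set xs : ℕ → X := fun i => c (i % n) with hxs
    have hpo : PseudoOrbitOn f D xs Set.univ := by
      intro i _
      have hmod : i % n < n := Nat.mod_lt _ (by omega)
      have hstep : (i + 1) % n = (i % n + 1) % n := (Nat.mod_add_mod i n 1).symm
      show (f (c (i % n)), c ((i + 1) % n)) ∈ D
      by_cases h : i % n + 1 = n
      · have h0 : (i + 1) % n = 0 := by rw [hstep, h, Nat.mod_self]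
        rw [h0]
        have := hcchain (i % n) hmod
        rwa [h, hcn, ← hc0] at this
      · have h1 : (i + 1) % n = i % n + 1 := by
          rw [hstep]; exact Nat.mod_eq_of_lt (by omega)
        rw [h1]
        exact hcchain (i % n) hmod
    obtain ⟨y, hy⟩ := hsh' xs hpo
    have hy0 : (y, x) ∈ E' := by
      have := hy 0 (Set.mem_univ 0)
      simpa [hxs, Nat.zero_mod, hc0] using this
    have hyn : (f^[n] y, x) ∈ E' := by
      have := hy n (Set.mem_univ n)
      simpa [hxs, Nat.mod_self, hc0] using this
    refine ⟨n, hn, f^[n] y, ⟨y, ?_, rfl⟩, ?_⟩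
    · exact hEU (hE'E ((haveI := hE'sym; SetRel.comm E').mp hy0))
    · exact hEU (hE'E ((haveI := hE'sym; SetRel.comm E').mp hyn))
end

section
/- Let (X, f) be a dynamical system, where X is a compact uniform space and f : X → X is a continuous surjection. If f has topological shadowing, then f has topological (F_t, F_t)-shadowing, where F_t is the family of thick subsets of ℕ. -/
open Filter Set Function

namespace ThickShadowAux

/-! ### Additive spans of lists of naturals, and a Frobenius-type lemma -/

def SpanL (l : List ℕ) (g : ℕ) : Prop :=
  ∃ L : List ℕ, (∀ a ∈ L, a ∈ l) ∧ L.sum = g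

lemma spanL_zero (l : List ℕ) : SpanL l 0 := ⟨[], by simp, rfl⟩

lemma spanL_mem {l : List ℕ} {a : ℕ} (h : a ∈ l) : SpanL l a := ⟨[a], by simp [h], by simp⟩

lemma spanL_add {l : List ℕ} {a b : ℕ} (ha : SpanL l a) (hb : SpanL l b) : SpanL l (a + b) := by
  obtain ⟨L1, h1, s1⟩ := ha
  obtain ⟨L2, h2, s2⟩ := hb
  refine ⟨L1 ++ L2, ?_, by simp [s1, s2]⟩
  intro c hc
  rcases List.mem_append.1 hc with h | h
  exacts [h1 c h, h2 c h]

lemma spanL_nsmul {l : List ℕ} {a : ℕ} (n : ℕ) (ha : SpanL l a) : SpanL l (n * a) := by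
  induction n with
  | zero => simpa using spanL_zero l
  | succ n ih =>
    have := spanL_add ih ha
    rwa [Nat.succ_mul]

lemma spanL_mono {l l' : List ℕ} (h : ∀ b ∈ l, b ∈ l') {g : ℕ} (hg : SpanL l g) :
    SpanL l' g := by
  obtain ⟨L, hL, hs⟩ := hg
  exact ⟨L, fun a ha => h a (hL a ha), hs⟩

lemma spanL_dvd {l : List ℕ} {d : ℕ} (hd : ∀ a ∈ l, d ∣ a) {g : ℕ} (hg : SpanL l g) : d ∣ g := by
  obtain ⟨L, hL, rfl⟩ := hg
  induction L with
  | nil => simp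
  | cons a L ih =>
    simp only [List.sum_cons]
    exact Nat.dvd_add (hd a (hL a (by simp))) (ih (fun b hb => hL b (by simp [hb])))

lemma dvd_foldr_gcd (l : List ℕ) : ∀ a ∈ l, l.foldr Nat.gcd 0 ∣ a := by
  induction l with
  | nil => simp
  | cons b r ih =>
    intro a ha
    rcases List.mem_cons.1 ha with rfl | ha'
    · exact Nat.gcd_dvd_left _ _
    · exact dvd_trans (Nat.gcd_dvd_right _ _) (ih a ha')

lemma bezout_nat (a b : ℕ) (ha : 0 < a) : ∃ m n : ℕ, a * m = b * n + Nat.gcd a b := by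
  rcases Nat.eq_zero_or_pos b with rfl | hb
  · exact ⟨1, 0, by simp⟩
  · set A := Nat.gcdA a b with hA
    set B := Nat.gcdB a b with hB
    set k : ℤ := |A| + |B| + 1 with hk
    have ha' : (1 : ℤ) ≤ (a : ℤ) := by exact_mod_cast ha
    have hb' : (1 : ℤ) ≤ (b : ℤ) := by exact_mod_cast hb
    have hnn1 : (0:ℤ) ≤ A + k * b := by
      nlinarith [le_abs_self A, neg_abs_le A, abs_nonneg A, abs_nonneg B]
    have hnn2 : (0:ℤ) ≤ k * a - B := by
      nlinarith [le_abs_self B, neg_abs_le B, abs_nonneg A, abs_nonneg B]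
    have hg : (Nat.gcd a b : ℤ) = a * A + b * B := Nat.gcd_eq_gcd_ab a b
    refine ⟨(A + k * b).toNat, (k * a - B).toNat, ?_⟩
    have key : (a : ℤ) * ((A + k * b).toNat : ℤ) = (b : ℤ) * ((k * a - B).toNat : ℤ) + (Nat.gcd a b : ℤ) := by
      rw [Int.toNat_of_nonneg hnn1, Int.toNat_of_nonneg hnn2, hg]
      ring
    exact_mod_cast key

lemma list_PN (l : List ℕ) : ∃ P N, SpanL l P ∧ SpanL l N ∧ P = N + l.foldr Nat.gcd 0 := by
  induction l with
  | nil => exact ⟨0, 0, spanL_zero _, spanL_zero _, by simp⟩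
  | cons a r ih =>
    obtain ⟨P, N, hP, hN, hPN⟩ := ih
    have hPc : SpanL (a :: r) P := spanL_mono (fun b hb => by simp [hb]) hP
    have hNc : SpanL (a :: r) N := spanL_mono (fun b hb => by simp [hb]) hN
    rcases Nat.eq_zero_or_pos a with rfl | hapos
    · refine ⟨P, N, hPc, hNc, ?_⟩
      simpa using hPN
    · obtain ⟨m, n, hbez⟩ := bezout_nat a (r.foldr Nat.gcd 0) hapos
      refine ⟨a * m + n * N, n * P, ?_, ?_, ?_⟩
      · exact spanL_add (by rw [mul_comm]; exact spanL_nsmul m (spanL_mem (by simp)))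
          (spanL_nsmul n hNc)
      · exact spanL_nsmul n hPc
      · have hthis : n * P = n * N + n * (r.foldr Nat.gcd 0) := by rw [hPN, Nat.mul_add]
        simp only [List.foldr_cons]
        calc a * m + n * N
            = (r.foldr Nat.gcd 0) * n + Nat.gcd a (r.foldr Nat.gcd 0) + n * N := by rw [hbez]
          _ = n * P + Nat.gcd a (r.foldr Nat.gcd 0) := by rw [hthis]; ring

lemma frobenius (l : List ℕ) :
    ∃ Λ : ℕ, ∀ g, l.foldr Nat.gcd 0 ∣ g → Λ ≤ g → SpanL l g := by
  obtain ⟨P, N, hP, hN, hPN⟩ := list_PN l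
  set d := l.foldr Nat.gcd 0 with hd
  have hdvd : ∀ a ∈ l, d ∣ a := dvd_foldr_gcd l
  refine ⟨N * N + 1, fun g hdg hΛ => ?_⟩
  rcases Nat.eq_zero_or_pos d with hd0 | hdpos
  · rw [hd0] at hdg
    rw [Nat.zero_dvd.mp hdg]
    exact spanL_zero l
  · have hdN : d ∣ N := spanL_dvd hdvd hN
    have hdP : d ∣ P := spanL_dvd hdvd hP
    have hgdg : d * (g / d) = g := Nat.mul_div_cancel' hdg
    rcases Nat.eq_zero_or_pos N with hN0 | hNpos
    · have hPd : P = d := by omega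
      have : g = (g / d) * P := by
        rw [hPd]
        have hcomm : g / d * d = d * (g / d) := Nat.mul_comm _ _
        omega
      rw [this]
      exact spanL_nsmul _ hP
    · have hNdN : d * (N / d) = N := Nat.mul_div_cancel' hdN
      set N' := N / d with hN'
      set g' := g / d with hg'
      have hN'pos : 0 < N' := by
        rcases Nat.eq_zero_or_pos N' with h | h
        · rw [h] at hNdN; omega
        · exact h
      have hNN : N * N < g := by omega
      have hstep : d * (d * (N' * N')) < d * g' := by
        calc d * (d * (N' * N')) = (d * N') * (d * N') := by ring
        _ = N * N := by rw [hNdN]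
        _ < g := hNN
        _ = d * g' := hgdg.symm
      have hsq : N' * N' < g' := by
        have hcancel : d * (N' * N') < g' := Nat.lt_of_mul_lt_mul_left hstep
        have hle : N' * N' ≤ d * (N' * N') := Nat.le_mul_of_pos_left _ hdpos
        omega
      set r := g' % N' with hr
      set q' := g' / N' with hq'
      have hqr : N' * q' + r = g' := Nat.div_add_mod g' N'
      have hrlt : r < N' := Nat.mod_lt _ hN'pos
      have hq'r : r < q' := by
        by_contra hcon
        push_neg at hcon
        have h1 : N' * q' ≤ N' * r := Nat.mul_le_mul_left _ hcon
        have h2 : N' * (r + 1) ≤ N' * N' := Nat.mul_le_mul_left _ hrlt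
        have h3 : N' * (r + 1) = N' * r + N' := by ring
        omega
      have hrep : (q' - r) * N + r * P = g := by
        have hq'r' : r ≤ q' := le_of_lt hq'r
        zify [hq'r']
        have e1 : (P : ℤ) = (N : ℤ) + (d : ℤ) := by exact_mod_cast hPN
        have e2 : (d : ℤ) * (g' : ℤ) = (g : ℤ) := by exact_mod_cast hgdg
        have e3 : (d : ℤ) * (N' : ℤ) = (N : ℤ) := by exact_mod_cast hNdN
        have e4 : (N' : ℤ) * (q' : ℤ) + (r : ℤ) = (g' : ℤ) := by exact_mod_cast hqr
        linear_combination (r : ℤ) * e1 - (q' : ℤ) * e3 + (d : ℤ) * e4 + e2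
      rw [← hrep]
      exact spanL_add (spanL_nsmul _ hN) (spanL_nsmul _ hP)



def lenSum (L : List (ℕ × ℕ)) : ℕ := (L.map fun r => r.2 - r.1).sum

@[simp] lemma lenSum_nil : lenSum [] = 0 := rfl

@[simp] lemma lenSum_cons (r : ℕ × ℕ) (L : List (ℕ × ℕ)) :
    lenSum (r :: L) = (r.2 - r.1) + lenSum L := by
  simp [lenSum]

def lk : List (ℕ × ℕ) → ℕ → ℕ
  | [], _ => 0
  | (p, q) :: r, j => if j < q - p then p + j else lk r (j - (q - p))

@[simp] lemma lk_nil (j : ℕ) : lk [] j = 0 := rfl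

lemma lk_cons (r : ℕ × ℕ) (L : List (ℕ × ℕ)) (j : ℕ) :
    lk (r :: L) j = if j < r.2 - r.1 then r.1 + j else lk L (j - (r.2 - r.1)) := by
  obtain ⟨p, q⟩ := r
  rfl

section Runs

variable {X : Type*} (f : X → X) (x : ℕ → X) (A : Set ℕ) (V : Set (X × X)) (z : X)

/-- A "good run": an interval of indices inside `A` whose endpoint values lie in the
`V`-ball around `z`. -/
def GRun (p q : ℕ) : Prop :=
  p < q ∧ (∀ i, p ≤ i → i < q → i ∈ A) ∧ (z, x p) ∈ V ∧ (z, x q) ∈ V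

variable {f x A V z}
variable {Ds : Set (X × X)}

lemma lk_head_ball (L : List (ℕ × ℕ)) (hL : ∀ r ∈ L, GRun x A V z r.1 r.2)
    (h : 0 < lenSum L) : (z, x (lk L 0)) ∈ V := by
  cases L with
  | nil => simp at h
  | cons r L' =>
    have hg := hL r (by simp)
    rw [lk_cons, if_pos (by have := hg.1; omega)]
    simpa using hg.2.2.1

theorem lk_exit
    (hxA : ∀ i ∈ A, (f (x i), x (i + 1)) ∈ V)
    (hcomp : ∀ a b c e : X, (a, b) ∈ V → (b, c) ∈ V → (c, e) ∈ V → (a, e) ∈ Ds)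
    (hsymm : ∀ a b : X, (a, b) ∈ V → (b, a) ∈ V) :
    ∀ (L : List (ℕ × ℕ)), (∀ r ∈ L, GRun x A V z r.1 r.2) →
    ∀ j, j + 1 = lenSum L → ∀ v : X, (z, v) ∈ V → (f (x (lk L j)), v) ∈ Ds := by
  intro L
  induction L with
  | nil => intro _ j h; simp at h
  | cons r L' ih =>
    intro hL j h v hv
    obtain ⟨p, q⟩ := r
    have hg : GRun x A V z p q := hL (p, q) (by simp)
    have hpq : p < q := hg.1
    rw [lenSum_cons] at h
    by_cases hj : j < q - p
    · have hje : j + 1 = q - p := by omega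
      rw [lk_cons, if_pos (by simpa using hj)]
      have hA' : p + j ∈ A := hg.2.1 _ (by omega) (by omega)
      have h1 : (f (x (p + j)), x (p + j + 1)) ∈ V := hxA _ hA'
      rw [show p + j + 1 = q by omega] at h1
      exact hcomp _ _ _ _ h1 (hsymm _ _ hg.2.2.2) hv
    · rw [lk_cons, if_neg (by simpa using hj)]
      exact ih (fun r hr => hL r (by simp [hr])) _ (by omega) v hv

theorem lk_jump
    (hxA : ∀ i ∈ A, (f (x i), x (i + 1)) ∈ V)
    (hVD : V ⊆ Ds)
    (hcomp : ∀ a b c e : X, (a, b) ∈ V → (b, c) ∈ V → (c, e) ∈ V → (a, e) ∈ Ds)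
    (hsymm : ∀ a b : X, (a, b) ∈ V → (b, a) ∈ V) :
    ∀ (L : List (ℕ × ℕ)), (∀ r ∈ L, GRun x A V z r.1 r.2) →
    ∀ j, j + 1 < lenSum L → (f (x (lk L j)), x (lk L (j + 1))) ∈ Ds := by
  intro L
  induction L with
  | nil => intro _ j h; simp at h
  | cons r L' ih =>
    intro hL j h
    obtain ⟨p, q⟩ := r
    have hg : GRun x A V z p q := hL (p, q) (by simp)
    have hpq : p < q := hg.1
    rw [lenSum_cons] at h
    have hL' : ∀ r ∈ L', GRun x A V z r.1 r.2 := fun r hr => hL r (by simp [hr])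
    by_cases hj1 : j + 1 < q - p
    · rw [lk_cons, if_pos (by simp only; omega), lk_cons, if_pos (by simpa using hj1)]
      have hA' : p + j ∈ A := hg.2.1 _ (by omega) (by omega)
      have h1 : (f (x (p + j)), x (p + j + 1)) ∈ V := hxA _ hA'
      rw [show p + j + 1 = p + (j + 1) by omega] at h1
      exact hVD h1
    · by_cases hj2 : j + 1 = q - p
      · rw [lk_cons, if_pos (by simp only; omega), lk_cons, if_neg (by simp only; omega)]
        have hlen' : 0 < lenSum L' := by omega
        have hv := lk_head_ball L' hL' hlen'
        rw [show j + 1 - (q - p) = 0 by omega]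
        have hA' : p + j ∈ A := hg.2.1 _ (by omega) (by omega)
        have h1 : (f (x (p + j)), x (p + j + 1)) ∈ V := hxA _ hA'
        rw [show p + j + 1 = q by omega] at h1
        exact hcomp _ _ _ _ h1 (hsymm _ _ hg.2.2.2) hv
      · rw [lk_cons, if_neg (by simp only; omega), lk_cons, if_neg (by simp only; omega)]
        rw [show j + 1 - (q - p) = (j - (q - p)) + 1 by omega]
        exact ih hL' _ (by omega)

end Runs

end ThickShadowAux

open ThickShadowAux in
/-- topological shadowing implies topological (F_t, F_t)-shadowing. -/
theorem fgShadowing_thick_of_shadowing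
    {X : Type*} [UniformSpace X] [CompactSpace X]
    (f : X → X) (hf : Continuous f) (hsurj : Function.Surjective f)
    (hsh : TopShadowing f) :
    FGShadowing f thickFamily thickFamily := by
  intro E hE
  obtain ⟨Ds, hDs, hshad⟩ := hsh E hE
  obtain ⟨V₀, hV₀, hV₀symm, hV₀comp⟩ := comp_comp_symm_mem_uniformity_sets hDs
  have hsymm' : ∀ a b : X, (a, b) ∈ V₀ → (b, a) ∈ V₀ := by
    intro a b h
    exact hV₀symm.symm a b h
  have hcomp' : ∀ a b c e : X, (a, b) ∈ V₀ → (b, c) ∈ V₀ → (c, e) ∈ V₀ → (a, e) ∈ Ds :=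
    fun a b c e hab hbc hce => hV₀comp ⟨c, ⟨b, hab, hbc⟩, hce⟩
  have hVD : V₀ ⊆ Ds := by
    rintro ⟨a, b⟩ hab
    exact hcomp' a a a b (refl_mem_uniformity hV₀) (refl_mem_uniformity hV₀) hab
  refine ⟨V₀, hV₀, ?_⟩
  rintro x ⟨A, hAthick, hxA⟩
  have hAthick' : Thick A := hAthick
  classical
  -- finite cover of X by V₀-balls
  obtain ⟨V₂, hV₂pair, hV₂sub⟩ := uniformity_hasBasis_open.mem_iff.mp hV₀
  obtain ⟨hV₂, hV₂open⟩ := hV₂pair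
  obtain ⟨Z, hZ⟩ := isCompact_univ.elim_finite_subcover
    (fun z : X => UniformSpace.ball z V₂)
    (fun z => UniformSpace.isOpen_ball z hV₂open)
    (by intro y _; exact Set.mem_iUnion.2 ⟨y, refl_mem_uniformity hV₂⟩)
  have hZball : ∀ y : X, ∃ z ∈ Z, (z, y) ∈ V₀ := by
    intro y
    have := hZ (Set.mem_univ y)
    obtain ⟨z, hz1, hz2⟩ := Set.mem_iUnion₂.1 this
    exact ⟨z, hz1, hV₂sub hz2⟩
  -- returns: arbitrarily long, arbitrarily far intervals in A with both endpoints in a common ball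
  have S0 : ∀ n T : ℕ, ∃ z ∈ Z, ∃ p q : ℕ,
      GRun x A V₀ z p q ∧ n + 1 ≤ q - p ∧ T ≤ p := by
    intro n T
    obtain ⟨k, hk⟩ := hAthick' (T + (Z.card + 1) * (n + 1) + 1)
    have hsel : ∀ i : ℕ, ∃ z ∈ Z, (z, x (k + T + i * (n + 1))) ∈ V₀ := fun i => hZball _
    choose zz hzz1 hzz2 using hsel
    have hcard : Z.card < (Finset.range (Z.card + 1)).card := by simp
    obtain ⟨i, hi, i', hi', hne, heq⟩ :=
      Finset.exists_ne_map_eq_of_card_lt_of_maps_to hcard (fun i _ => hzz1 i)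
    obtain ⟨a, b, hab, hb, heq2⟩ : ∃ a b : ℕ, a < b ∧ b ≤ Z.card ∧ zz a = zz b := by
      rcases Nat.lt_or_ge i i' with h | h
      · exact ⟨i, i', h, Nat.lt_succ_iff.mp (Finset.mem_range.1 hi'), heq⟩
      · have h' : i' < i := by omega
        exact ⟨i', i, h', Nat.lt_succ_iff.mp (Finset.mem_range.1 hi), heq.symm⟩
    have hmul : a * (n + 1) + (n + 1) ≤ b * (n + 1) := by
      have : (a + 1) * (n + 1) ≤ b * (n + 1) := Nat.mul_le_mul_right _ (by omega)
      have hexp : (a + 1) * (n + 1) = a * (n + 1) + (n + 1) := by ring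
      omega
    have hbZ : b * (n + 1) ≤ Z.card * (n + 1) := Nat.mul_le_mul_right _ hb
    have hZexp : (Z.card + 1) * (n + 1) = Z.card * (n + 1) + (n + 1) := by ring
    refine ⟨zz a, hzz1 a, k + T + a * (n + 1), k + T + b * (n + 1), ⟨?_, ?_, ?_, ?_⟩, ?_, ?_⟩
    · omega
    · intro i hpi hiq
      have h1 : k ≤ i := by omega
      have h2 : i - k < T + (Z.card + 1) * (n + 1) + 1 := by omega
      have := hk (i - k) h2
      rwa [Nat.add_sub_cancel' h1] at this
    · exact hzz2 a
    · rw [heq2]; exact hzz2 b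
    · omega
    · omega
  -- one common ball center works for all (length, position) requirements
  have hzex : ∃ z : X, ∀ n T : ℕ, ∃ p q : ℕ,
      GRun x A V₀ z p q ∧ n + 1 ≤ q - p ∧ T ≤ p := by
    by_contra hcon
    push_neg at hcon
    choose nn TT hblock using hcon
    obtain ⟨z, hzZ, p, q, hg, hlen, hT⟩ := S0 (Z.sup nn) (Z.sup TT)
    have hb := hblock z p q hg (by have := Finset.le_sup (f := nn) hzZ; omega)
    have := Finset.le_sup (f := TT) hzZ
    omega
  obtain ⟨zs, hzs⟩ := hzex
  -- d : the (stabilized) gcd of all return lengths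
  have hdex : ∃ e : ℕ, 0 < e ∧ ∃ l : List ℕ,
      (∀ a ∈ l, ∃ p q : ℕ, GRun x A V₀ zs p q ∧ q - p = a) ∧ l.foldr Nat.gcd 0 = e := by
    obtain ⟨p, q, hg, hlen, -⟩ := hzs 0 0
    refine ⟨q - p, by omega, [q - p], ?_, by simp⟩
    intro a ha
    simp only [List.mem_singleton] at ha
    subst ha
    exact ⟨p, q, hg, rfl⟩
  set d := Nat.find hdex with hdd
  obtain ⟨hdpos, l₀, hl₀, hl₀gcd⟩ := Nat.find_spec hdex
  have hddvd : ∀ p q : ℕ, GRun x A V₀ zs p q → d ∣ q - p := by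
    intro p q hg
    by_contra hnd
    have h1 : Nat.gcd (q - p) d ∣ d := Nat.gcd_dvd_right _ _
    have h2 : Nat.gcd (q - p) d ≠ d := by
      intro h
      exact hnd (h ▸ Nat.gcd_dvd_left (q - p) d)
    have h3 : Nat.gcd (q - p) d < d := by
      have := Nat.le_of_dvd hdpos h1; omega
    have h4 : 0 < Nat.gcd (q - p) d := Nat.gcd_pos_of_pos_right _ hdpos
    refine Nat.find_min hdex h3 ⟨h4, (q - p) :: l₀, ?_, by simp [hl₀gcd, hdd]⟩
    intro a ha
    rcases List.mem_cons.1 ha with rfl | ha'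
    exacts [⟨p, q, hg, rfl⟩, hl₀ a ha']
  -- Frobenius padding
  obtain ⟨Λ₁, hFrob⟩ := frobenius l₀
  have Pads0 : ∀ cl : List ℕ, (∀ a ∈ cl, a ∈ l₀) → ∃ L : List (ℕ × ℕ),
      (∀ r ∈ L, GRun x A V₀ zs r.1 r.2) ∧ lenSum L = cl.sum := by
    intro cl
    induction cl with
    | nil => exact fun _ => ⟨[], by simp, by simp⟩
    | cons a r ih =>
      intro h
      obtain ⟨L, hL, hsum⟩ := ih (fun b hb => h b (List.mem_cons_of_mem _ hb))
      obtain ⟨p, q, hg, hlen⟩ := hl₀ a (h a List.mem_cons_self)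
      refine ⟨(p, q) :: L, ?_, ?_⟩
      · rintro rr hrr
        rcases List.mem_cons.1 hrr with rfl | hrr'
        exacts [hg, hL _ hrr']
      · rw [lenSum_cons, hsum, List.sum_cons]
        simpa using congrArg (· + r.sum) hlen
  have Pads : ∀ g : ℕ, d ∣ g → Λ₁ ≤ g → ∃ L : List (ℕ × ℕ),
      (∀ r ∈ L, GRun x A V₀ zs r.1 r.2) ∧ lenSum L = g := by
    intro g hdg hlg
    obtain ⟨cl, hcl, hclsum⟩ := hFrob g (by rw [hl₀gcd]; exact hdg) hlg
    obtain ⟨L, hL, hsum⟩ := Pads0 cl hcl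
    exact ⟨L, hL, by rw [hsum, hclsum]⟩
  -- residue pigeonhole
  have hσex : ∃ σ : ℕ, ∀ n T : ℕ, ∃ p q : ℕ,
      GRun x A V₀ zs p q ∧ n + 1 ≤ q - p ∧ T ≤ p ∧ p % d = σ := by
    by_contra hcon
    push_neg at hcon
    choose nn TT hblock using hcon
    obtain ⟨p, q, hg, hlen, hT⟩ := hzs ((Finset.range d).sup nn) ((Finset.range d).sup TT)
    have hmem : p % d ∈ Finset.range d := Finset.mem_range.2 (Nat.mod_lt _ hdpos)
    refine hblock (p % d) p q hg ?_ ?_ rfl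
    · have := Finset.le_sup (f := nn) hmem; omega
    · exact le_trans (Finset.le_sup (f := TT) hmem) hT
  obtain ⟨σ, Supply⟩ := hσex
  -- recursive choice of the matched returns
  have hnext : ∀ cur : ℕ × ℕ, ∀ m : ℕ, ∃ pq : ℕ × ℕ,
      GRun x A V₀ zs pq.1 pq.2 ∧ m + 1 ≤ pq.2 - pq.1 ∧ cur.2 + Λ₁ + 1 ≤ pq.1 ∧
        pq.1 % d = σ := by
    intro cur m
    obtain ⟨p, q, h1, h2, h3, h4⟩ := Supply m (cur.2 + Λ₁ + 1)
    exact ⟨(p, q), h1, h2, h3, h4⟩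
  let st : ℕ → ℕ × ℕ := fun m =>
    Nat.rec (hnext (0, 0) 0).choose (fun m ih => (hnext ih (m + 1)).choose) m
  have hstS : ∀ m, st (m + 1) = (hnext (st m) (m + 1)).choose := fun m => rfl
  have hstP : ∀ m, GRun x A V₀ zs (st m).1 (st m).2 ∧ m + 1 ≤ (st m).2 - (st m).1 ∧
      (st m).1 % d = σ := by
    intro m
    cases m with
    | zero =>
      have h := (hnext (0, 0) 0).choose_spec
      exact ⟨h.1, h.2.1, h.2.2.2⟩
    | succ m =>
      have h := (hnext (st m) (m + 1)).choose_spec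
      rw [hstS m]
      exact ⟨h.1, h.2.1, h.2.2.2⟩
  have hgap : ∀ m, (st m).2 + Λ₁ + 1 ≤ (st (m + 1)).1 := by
    intro m
    have h := (hnext (st m) (m + 1)).choose_spec
    rw [hstS m]
    exact h.2.2.1
  have hppos : 1 ≤ (st 0).1 := by
    have h := (hnext (0, 0) 0).choose_spec
    have h2 : 0 + Λ₁ + 1 ≤ (st 0).1 := h.2.2.1
    omega
  have hpq : ∀ m, (st m).1 < (st m).2 := fun m => (hstP m).1.1
  have hplt : ∀ m, (st m).1 < (st (m + 1)).1 := by
    intro m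
    have := hgap m
    have := hpq m
    omega
  have hpmono : ∀ a b : ℕ, a ≤ b → (st a).1 ≤ (st b).1 := by
    have h := monotone_nat_of_le_succ (f := fun m => (st m).1) (fun n => (hplt n).le)
    exact fun a b hab => h hab
  have hmge : ∀ m, m < (st m).1 := by
    intro m
    induction m with
    | zero => omega
    | succ m ih =>
      have := hgap m
      have := hpq m
      omega
  -- pads between consecutive matched returns
  have hgapdvd : ∀ m, d ∣ (st (m + 1)).1 - (st m).2 := by
    intro m
    have h1 : d ∣ (st (m + 1)).1 - (st m).1 := by
      have e1 := (hstP m).2.2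
      have e2 := (hstP (m + 1)).2.2
      have hle : (st m).1 ≤ (st (m + 1)).1 := (hplt m).le
      have hmodeq : (st m).1 ≡ (st (m + 1)).1 [MOD d] := by
        unfold Nat.ModEq
        rw [e1, e2]
      exact (Nat.modEq_iff_dvd' hle).mp hmodeq
    have h2 : d ∣ (st m).2 - (st m).1 := hddvd _ _ (hstP m).1
    have h3 : (st (m + 1)).1 - (st m).2 =
        ((st (m + 1)).1 - (st m).1) - ((st m).2 - (st m).1) := by
      have := hpq m
      have := hgap m
      omega
    rw [h3]
    exact Nat.dvd_sub h1 h2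
  have hpadex : ∀ m, ∃ L : List (ℕ × ℕ),
      (∀ r ∈ L, GRun x A V₀ zs r.1 r.2) ∧ lenSum L = (st (m + 1)).1 - (st m).2 := by
    intro m
    refine Pads _ (hgapdvd m) ?_
    have := hgap m
    omega
  choose padL hpadGR hpadlen using hpadex
  let SL : ℕ → List (ℕ × ℕ) := fun m => st m :: padL m
  have hSLGR : ∀ m, ∀ r ∈ SL m, GRun x A V₀ zs r.1 r.2 := by
    intro m r hr
    rcases List.mem_cons.1 hr with rfl | hr'
    exacts [(hstP m).1, hpadGR m r hr']
  have hSLlen : ∀ m, lenSum (SL m) = (st (m + 1)).1 - (st m).1 := by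
    intro m
    show lenSum (st m :: padL m) = _
    rw [lenSum_cons, hpadlen m]
    have := hpq m
    have := hgap m
    omega
  -- the spliced pseudo-orbit
  obtain ⟨z₀, hz₀⟩ := (hsurj.iterate (st 0).1) (x (st 0).1)
  let stg : ℕ → ℕ := fun t => Nat.findGreatest (fun m => (st m).1 ≤ t) t
  let ζ : ℕ → X := fun t => if t < (st 0).1 then f^[t] z₀
    else x (lk (SL (stg t)) (t - (st (stg t)).1))
  have hstg_spec : ∀ t, (st 0).1 ≤ t → (st (stg t)).1 ≤ t ∧ t < (st (stg t + 1)).1 := by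
    intro t ht
    constructor
    · exact Nat.findGreatest_spec (P := fun m => (st m).1 ≤ t) (Nat.zero_le t) ht
    · by_contra hcon
      push_neg at hcon
      have hle : stg t + 1 ≤ t := by
        have := hmge (stg t + 1)
        omega
      exact Nat.findGreatest_is_greatest (Nat.lt_succ_self (stg t)) hle hcon
  have hstg_eq : ∀ m t, (st m).1 ≤ t → t < (st (m + 1)).1 → stg t = m := by
    intro m t h1 h2
    have hbase : (st 0).1 ≤ t := le_trans (hpmono 0 m (Nat.zero_le m)) h1
    obtain ⟨hA', hB'⟩ := hstg_spec t hbase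
    by_contra hne
    rcases Nat.lt_or_ge (stg t) m with hlt | hge
    · have h5 : stg t + 1 ≤ m := hlt
      have : (st (stg t + 1)).1 ≤ (st m).1 := hpmono _ _ h5
      omega
    · have hgt : m + 1 ≤ stg t := by omega
      have : (st (m + 1)).1 ≤ (st (stg t)).1 := hpmono _ _ hgt
      omega
  have hζ_stage : ∀ m j, j < lenSum (SL m) → ζ ((st m).1 + j) = x (lk (SL m) j) := by
    intro m j hj
    have h1 : (st m).1 ≤ (st m).1 + j := by omega
    have h2 : (st m).1 + j < (st (m + 1)).1 := by
      have := hSLlen m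
      have := hplt m
      omega
    have hm : stg ((st m).1 + j) = m := hstg_eq m _ h1 h2
    have hnotlt : ¬((st m).1 + j < (st 0).1) := by
      have := hpmono 0 m (Nat.zero_le m)
      omega
    show (if (st m).1 + j < (st 0).1 then f^[(st m).1 + j] z₀
      else x (lk (SL (stg ((st m).1 + j))) ((st m).1 + j - (st (stg ((st m).1 + j))).1))) = _
    rw [if_neg hnotlt, hm, Nat.add_sub_cancel_left]
  have hζ_bw : ∀ t, t < (st 0).1 → ζ t = f^[t] z₀ := by
    intro t ht
    show (if t < (st 0).1 then _ else _) = _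
    rw [if_pos ht]
  have hlk_zero : ∀ m, lk (SL m) 0 = (st m).1 := by
    intro m
    show lk (st m :: padL m) 0 = _
    rw [lk_cons, if_pos (by have := hpq m; omega)]
    omega
  have hζ_start : ∀ m, ζ ((st m).1) = x ((st m).1) := by
    intro m
    have h0 : 0 < lenSum (SL m) := by
      have := hSLlen m
      have := hplt m
      omega
    have h := hζ_stage m 0 h0
    rw [hlk_zero] at h
    simpa using h
  -- ζ is a genuine Ds-pseudo-orbit
  have hζpseudo : PseudoOrbitOn f Ds ζ Set.univ := by
    rintro t -
    rcases Nat.lt_or_ge (t + 1) (st 0).1 with h1 | h1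
    · rw [hζ_bw t (by omega), hζ_bw (t + 1) h1, Function.iterate_succ_apply']
      exact refl_mem_uniformity hDs
    · rcases Nat.lt_or_ge t (st 0).1 with h2 | h2
      · have heq : t + 1 = (st 0).1 := by omega
        rw [hζ_bw t h2, heq, hζ_start 0]
        have : f (f^[t] z₀) = f^[t + 1] z₀ := (Function.iterate_succ_apply' f t z₀).symm
        rw [this, heq, hz₀]
        exact refl_mem_uniformity hDs
      · set m := stg t with hm
        have hspec1 : (st m).1 ≤ t := (hstg_spec t h2).1
        have hspec2 : t < (st (m + 1)).1 := (hstg_spec t h2).2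
        have hjlen : t - (st m).1 < lenSum (SL m) := by
          have := hSLlen m
          omega
        have e1 : ζ t = x (lk (SL m) (t - (st m).1)) := by
          have h := hζ_stage m (t - (st m).1) hjlen
          rw [show (st m).1 + (t - (st m).1) = t by omega] at h
          exact h
        rcases Nat.lt_or_ge ((t - (st m).1) + 1) (lenSum (SL m)) with hin | hout
        · have e2 : ζ (t + 1) = x (lk (SL m) ((t - (st m).1) + 1)) := by
            have := hζ_stage m ((t - (st m).1) + 1) hin
            rw [show (st m).1 + ((t - (st m).1) + 1) = t + 1 by omega] at this
            exact this
          rw [e1, e2]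
          exact lk_jump hxA hVD hcomp' hsymm' (SL m) (hSLGR m) _ hin
        · have hje : (t - (st m).1) + 1 = lenSum (SL m) := by omega
          have ht1 : t + 1 = (st (m + 1)).1 := by
            have := hSLlen m
            omega
          have e2 : ζ (t + 1) = x ((st (m + 1)).1) := by
            rw [ht1, hζ_start (m + 1)]
          rw [e1, e2]
          exact lk_exit hxA hcomp' hsymm' (SL m) (hSLGR m) _ hje _ ((hstP (m + 1)).1.2.2.1)
  -- matched intervals
  have hmatch : ∀ m j, j < (st m).2 - (st m).1 → ζ ((st m).1 + j) = x ((st m).1 + j) := by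
    intro m j hj
    have hlen : j < lenSum (SL m) := by
      have h := hSLlen m
      have := hgap m
      omega
    rw [hζ_stage m j hlen]
    congr 1
    show lk (st m :: padL m) j = _
    rw [lk_cons, if_pos hj]
  -- conclude via shadowing
  obtain ⟨y, hy⟩ := hshad ζ hζpseudo
  refine ⟨y, {t | ζ t = x t}, ?_, ?_⟩
  · show Thick {t | ζ t = x t}
    intro n
    refine ⟨(st n).1, fun i hi => ?_⟩
    have : i < (st n).2 - (st n).1 := by
      have := (hstP n).2.1
      omega
    exact hmatch n i this
  · intro i hi
    have h := hy i (Set.mem_univ i)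
    have hζi : ζ i = x i := hi
    rwa [hζi] at h
end

section
/- Let (X, f) be a dynamical system, where X is a compact uniform space and f : X → X is a continuous surjection, and suppose f is chain recurrent, i.e., CR(f) = X. Then the following are equivalent: (1) f has topological shadowing; (2) f has topological (𝒟, F_t)-shadowing; (3) f has topological (F_t, F_t)-shadowing; (4) f has topological (ℕ, F_t)-shadowing, where in (4) the first family is the family {ℕ} of sets containing all of ℕ (equivalently, full pseudo orbits). -/
open Filter Set Function

section ChainMachinery

set_option linter.unusedSectionVars false
variable {X : Type*} [UniformSpace X] {f : X → X}

/-- A chain of exact length `n`. -/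
def COL (f : X → X) (D : Set (X × X)) (x y : X) (n : ℕ) : Prop :=
  ∃ c : ℕ → X, c 0 = x ∧ c n = y ∧ ∀ i < n, (f (c i), c (i + 1)) ∈ D

lemma dchain_iff_col {D : Set (X × X)} {x y : X} :
    DChain f D x y ↔ ∃ n, 1 ≤ n ∧ COL f D x y n := by
  constructor
  · rintro ⟨n, hn, c, h0, hn', hs⟩; exact ⟨n, hn, c, h0, hn', hs⟩
  · rintro ⟨n, hn, c, h0, hn', hs⟩; exact ⟨n, hn, c, h0, hn', hs⟩

lemma COL.mono {D D' : Set (X × X)} (h : D ⊆ D') {x y : X} {n : ℕ}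
    (hc : COL f D x y n) : COL f D' x y n := by
  obtain ⟨c, h0, hn, hs⟩ := hc
  exact ⟨c, h0, hn, fun i hi => h (hs i hi)⟩

lemma COL.single {D : Set (X × X)} {x y : X} (h : (f x, y) ∈ D) : COL f D x y 1 := by
  refine ⟨fun i => if i = 0 then x else y, by simp, by simp, ?_⟩
  intro i hi
  interval_cases i
  simpa using h

lemma COL.concat {D : Set (X × X)} {x y z : X} {n m : ℕ}
    (h1 : COL f D x y n) (h2 : COL f D y z m) : COL f D x z (n + m) := by
  obtain ⟨c, hc0, hcn, hcs⟩ := h1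
  obtain ⟨d, hd0, hdm, hds⟩ := h2
  refine ⟨fun i => if i ≤ n then c i else d (i - n), by simpa using hc0, ?_, ?_⟩
  · by_cases hm : m = 0
    · subst hm; simp only [Nat.add_zero, le_refl, if_pos]; rw [hcn, ← hd0, ← hdm]
    · have hnm : ¬ (n + m ≤ n) := by omega
      simp only [if_neg hnm, Nat.add_sub_cancel_left, hdm]
  · intro i hi
    by_cases h1i : i + 1 ≤ n
    · have : i ≤ n := by omega
      simp only [if_pos this, if_pos h1i]
      exact hcs i (by omega)
    · have hin : n ≤ i := by omega
      have hv : (if i ≤ n then c i else d (i - n)) = d (i - n) := by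
        by_cases hin' : i ≤ n
        · have : i = n := le_antisymm hin' hin
          subst this
          simp only [le_refl, if_pos, Nat.sub_self, hd0, hcn]
        · simp [hin']
      simp only []
      rw [hv, if_neg h1i]
      have : i + 1 - n = (i - n) + 1 := by omega
      rw [this]
      exact hds (i - n) (by omega)

end ChainMachinery
section Reversal
set_option linter.unusedSectionVars false
variable {X : Type*} [UniformSpace X] [CompactSpace X] {f : X → X}

lemma single_step_reverse (hf : Continuous f) (hcr : CR f = Set.univ)
    {D : Set (X × X)} (hD : D ∈ uniformity X) :
    ∃ D' ∈ uniformity X, D' ⊆ D ∧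
      ∀ a b : X, (f a, b) ∈ D' → ∃ m, 1 ≤ m ∧ COL f D b a m := by
  obtain ⟨D1, hD1, hD1c⟩ := comp_mem_uniformity_sets hD
  have hUC : UniformContinuous f := CompactSpace.uniformContinuous_of_continuous hf
  have hW : {p : X × X | (f p.1, f p.2) ∈ D1} ∈ uniformity X := hUC hD1
  set V1 := {p : X × X | (f p.1, f p.2) ∈ D1} ∩ D1 ∩ D with hV1def
  have hV1 : V1 ∈ uniformity X := inter_mem (inter_mem hW hD1) hD
  obtain ⟨D0, hD0, hD0sym, hD0comp⟩ := comp_symm_mem_uniformity_sets hV1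
  set D' := D0 ∩ SetRel.symmetrize V1 with hD'def
  have hD'mem : D' ∈ uniformity X := inter_mem hD0 (symmetrize_mem_uniformity hV1)
  have hD'sym : ∀ {p q : X}, (p, q) ∈ D' → (q, p) ∈ D' := by
    rintro p q ⟨h1, h2⟩
    exact ⟨hD0sym.symm _ _ h1, ⟨h2.2, h2.1⟩⟩
  have hD'V1 : D' ⊆ V1 := fun p hp => SetRel.symmetrize_subset_self hp.2
  have hD'D1 : D' ⊆ D1 := fun p hp => (hD'V1 hp).1.2
  have hD'D : D' ⊆ D := fun p hp => (hD'V1 hp).2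
  have hD'W : ∀ {p q : X}, (p, q) ∈ D' → (f p, f q) ∈ D1 := fun hp => (hD'V1 hp).1.1
  refine ⟨D', hD'mem, hD'D, ?_⟩
  intro a b hab
  have ha : a ∈ CR f := by rw [hcr]; exact Set.mem_univ a
  obtain ⟨n, hn, c, hc0, hcn, hcs⟩ := ha D' hD'mem
  -- (b, c 1) ∈ D0 ∘ D0 ⊆ V1, so (f b, f (c 1)) ∈ D1
  have hstep0 : (f a, c 1) ∈ D' := by
    have := hcs 0 (by omega); rwa [hc0] at this
  have hbc1 : (b, c 1) ∈ V1 := hD0comp ⟨f a, (hD'sym hab).1, hstep0.1⟩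
  have hfb : (f b, f (c 1)) ∈ D1 := hbc1.1.1
  rcases Nat.lt_or_ge n 2 with h2 | h2
  · -- n = 1 : c 1 = a
    have hn1 : n = 1 := by omega
    subst hn1
    have hc1 : c 1 = a := hcn
    rw [hc1] at hstep0 hfb
    have : (f b, a) ∈ D := hD1c ⟨f a, hfb, hD'D1 hstep0⟩
    exact ⟨1, le_refl 1, COL.single this⟩
  · -- n ≥ 2
    have hfbc2 : (f b, c 2) ∈ D := hD1c ⟨f (c 1), hfb, hD'D1 (hcs 1 (by omega))⟩
    refine ⟨n - 1, by omega, fun i => if i = 0 then b else c (i + 1), by simp, ?_, ?_⟩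
    · show (if n - 1 = 0 then b else c (n - 1 + 1)) = a
      rw [if_neg (by omega : ¬ (n - 1 = 0)), (by omega : n - 1 + 1 = n), hcn]
    · intro i hi
      rcases Nat.eq_zero_or_pos i with h0 | h0
      · subst h0
        simp only [if_pos rfl, if_neg (by omega : ¬ (0+1 = 0))]
        exact hfbc2
      · simp only [if_neg (by omega : ¬ (i = 0)), if_neg (by omega : ¬ (i + 1 = 0))]
        exact hD'D (hcs (i + 1) (by omega))

lemma chain_reverse (hf : Continuous f) (hcr : CR f = Set.univ)
    {D : Set (X × X)} (hD : D ∈ uniformity X) :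
    ∃ D' ∈ uniformity X, D' ⊆ D ∧
      ∀ x y n, COL f D' x y n → 1 ≤ n → ∃ m, 1 ≤ m ∧ COL f D y x m := by
  obtain ⟨D', hD'mem, hD'D, hrev⟩ := single_step_reverse hf hcr hD
  refine ⟨D', hD'mem, hD'D, ?_⟩
  intro x y n
  induction n generalizing x y with
  | zero => intro _ h; omega
  | succ n ih =>
    intro hc _
    obtain ⟨c, h0, hn1, hs⟩ := hc
    have hlast : (f (c n), y) ∈ D' := by
      have := hs n (by omega); rwa [hn1] at this
    obtain ⟨m1, hm1, hcol1⟩ := hrev (c n) y hlast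
    rcases Nat.eq_zero_or_pos n with h | h
    · subst h
      rw [← h0]
      exact ⟨m1, hm1, hcol1⟩
    · have hfront : COL f D' x (c n) n := ⟨c, h0, rfl, fun i hi => hs i (by omega)⟩
      obtain ⟨m2, hm2, hcol2⟩ := ih x (c n) hfront h
      exact ⟨m1 + m2, by omega, hcol1.concat hcol2⟩

/-- Replace the endpoints of a loop at `p` to get a chain from `u` to `w`. -/
lemma bridge_general {Dm Db : Set (X × X)} (hcomp : SetRel.comp Dm Dm ⊆ Db) (hsub : Dm ⊆ Db)
    {p u w : X} {l : ℕ} (hl : 2 ≤ l) (hloop : COL f Dm p p l)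
    (hu : (f u, f p) ∈ Dm) (hw : (p, w) ∈ Dm) : COL f Db u w l := by
  obtain ⟨c, h0, hl', hs⟩ := hloop
  refine ⟨fun i => if i = 0 then u else if i = l then w else c i, by simp, ?_, ?_⟩
  · have hne : ¬ (l = 0) := by omega
    simp [hne]
  · intro i hi
    rcases Nat.eq_zero_or_pos i with h0i | h0i
    · subst h0i
      simp only [if_pos rfl, if_neg (by omega : ¬ (0 + 1 = 0))]
      by_cases h1l : 0 + 1 = l
      · omega
      · simp only [if_neg h1l]
        refine hcomp ⟨f p, hu, ?_⟩
        have := hs 0 (by omega); rwa [h0] at this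
    · by_cases hil : i + 1 = l
      · simp only [if_neg (by omega : ¬ (i = 0)), if_neg (by omega : ¬ (i = l)), if_pos hil]
        refine hcomp ⟨p, ?_, hw⟩
        have := hs i (by omega)
        rwa [hil, hl'] at this
      · simp only [if_neg (by omega : ¬ (i = 0)), if_neg (by omega : ¬ (i = l)),
          if_neg (by omega : ¬ (i + 1 = 0)), if_neg hil]
        exact hsub (hs i hi)

end Reversal
section NumSemigroup

lemma nsmul_mem_of_addclosed {S : Set ℕ} (h0 : 0 ∈ S)
    (hadd : ∀ a ∈ S, ∀ b ∈ S, a + b ∈ S) {s : ℕ} (hs : s ∈ S) :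
    ∀ k : ℕ, k * s ∈ S := by
  intro k
  induction k with
  | zero => simpa using h0
  | succ k ih => have := hadd _ ih _ hs; rwa [← Nat.succ_mul] at this

lemma nat_semigroup {S : Set ℕ} (h0 : 0 ∈ S) (hadd : ∀ a ∈ S, ∀ b ∈ S, a + b ∈ S)
    {s₀ : ℕ} (hs₀ : s₀ ∈ S) (hs₀pos : 0 < s₀) :
    ∃ m N : ℕ, 0 < m ∧ (∀ s ∈ S, m ∣ s) ∧ ∀ t, N ≤ t → t * m ∈ S := by
  classical
  set H : AddSubgroup ℤ := AddSubgroup.closure ((fun n : ℕ => (n : ℤ)) '' S) with hHdef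
  obtain ⟨g, hg⟩ := Int.subgroup_cyclic H
  -- decomposition of elements of H
  have hdec : ∀ z ∈ H, ∃ u w : ℕ, u ∈ S ∧ w ∈ S ∧ z = (u : ℤ) - w := by
    intro z hz
    induction hz using AddSubgroup.closure_induction with
    | mem x hx =>
      obtain ⟨s, hs, rfl⟩ := hx
      exact ⟨s, 0, hs, h0, by simp⟩
    | zero => exact ⟨0, 0, h0, h0, by simp⟩
    | add x y hx hy ihx ihy =>
      obtain ⟨u1, w1, hu1, hw1, rfl⟩ := ihx
      obtain ⟨u2, w2, hu2, hw2, rfl⟩ := ihy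
      exact ⟨u1 + u2, w1 + w2, hadd _ hu1 _ hu2, hadd _ hw1 _ hw2, by push_cast; ring⟩
    | neg x hx ihx =>
      obtain ⟨u, w, hu, hw, rfl⟩ := ihx
      exact ⟨w, u, hw, hu, by ring⟩
  set m := g.natAbs with hmdef
  -- m divides every element of S
  have hdvd : ∀ s ∈ S, m ∣ s := by
    intro s hs
    have hsH : (s : ℤ) ∈ H := AddSubgroup.subset_closure ⟨s, hs, rfl⟩
    rw [hg, AddSubgroup.mem_closure_singleton] at hsH
    obtain ⟨n, hn⟩ := hsH
    have : g ∣ (s : ℤ) := ⟨n, by rw [← hn, zsmul_eq_mul, mul_comm]; norm_cast⟩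
    have h2 : g.natAbs ∣ (s : ℤ).natAbs := Int.natAbs_dvd_natAbs.mpr this
    simpa using h2
  have hmpos : 0 < m := by
    rcases Nat.eq_zero_or_pos m with h | h
    · exfalso
      obtain ⟨c, hc⟩ := hdvd s₀ hs₀
      rw [h, Nat.zero_mul] at hc
      omega
    · exact h
  -- (m : ℤ) ∈ H
  have hgH : g ∈ H := by
    rw [hg]; exact AddSubgroup.subset_closure rfl
  have hmH : (m : ℤ) ∈ H := by
    rcases Int.natAbs_eq g with h | h
    · rwa [← h]
    · have : (m : ℤ) = -g := by rw [h, neg_neg]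
      rw [this]; exact neg_mem hgH
  obtain ⟨u, w, hu, hw, huw⟩ := hdec _ hmH
  have huw' : u = w + m := by
    have : (u : ℤ) = (w : ℤ) + m := by omega
    exact_mod_cast this
  obtain ⟨c, hc⟩ := hdvd w hw
  rcases Nat.eq_zero_or_pos c with hc0 | hc0
  · -- w = 0, so m ∈ S
    have hwm : w = 0 := by rw [hc, hc0, Nat.mul_zero]
    have hum : u = m := by omega
    have hmS : m ∈ S := hum ▸ hu
    exact ⟨m, 0, hmpos, hdvd, fun t _ => nsmul_mem_of_addclosed h0 hadd hmS t⟩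
  · -- w = m * c, u = m * (c + 1)
    refine ⟨m, c * c + 2 * c, hmpos, hdvd, ?_⟩
    intro t ht
    set r := t % c with hrdef
    set d := t / c with hddef
    have hdm : c * d + r = t := by rw [hrdef, hddef, Nat.div_add_mod]
    have hrc : r < c := Nat.mod_lt _ hc0
    have hdc : c ≤ d := by
      rw [hddef, Nat.le_div_iff_mul_le hc0]
      nlinarith
    obtain ⟨q, hq⟩ : ∃ q, d = q + r := ⟨d - r, by omega⟩
    have key : t * m = q * (c * m) + r * ((c + 1) * m) := by
      rw [hq] at hdm
      rw [← hdm]; ring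
    have hcm : c * m = w := by rw [hc]; ring
    have hcu : (c + 1) * m = u := by rw [huw', ← hcm]; ring
    rw [key, hcm, hcu]
    have h1 : q * w ∈ S := nsmul_mem_of_addclosed h0 hadd hw q
    have h2 : r * u ∈ S := nsmul_mem_of_addclosed h0 hadd hu r
    exact hadd _ h1 _ h2

end NumSemigroup
section Concat
set_option linter.unusedSectionVars false
variable {X : Type*} [UniformSpace X] {f : X → X}

/-- Partial sums of segment lengths. -/
def segSum (L : ℕ → ℕ) : ℕ → ℕ
  | 0 => 0
  | j + 1 => segSum L j + L j

lemma segSum_mono {L : ℕ → ℕ} : ∀ {a b : ℕ}, a ≤ b → segSum L a ≤ segSum L b := by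
  intro a b hab
  induction b with
  | zero => simpa [Nat.le_zero.mp hab]
  | succ b ih =>
    rcases Nat.lt_or_ge a (b + 1) with h | h
    · exact le_trans (ih (by omega)) (by simp [segSum])
    · have : a = b + 1 := by omega
      subst this; rfl

lemma segSum_ge {L : ℕ → ℕ} (hL : ∀ j, 1 ≤ L j) : ∀ j, j ≤ segSum L j := by
  intro j
  induction j with
  | zero => simp [segSum]
  | succ j ih => have := hL j; simp only [segSum]; omega

def segIdx (L : ℕ → ℕ) (i : ℕ) : ℕ := Nat.findGreatest (fun j => segSum L j ≤ i) i

lemma segIdx_spec {L : ℕ → ℕ} (hL : ∀ j, 1 ≤ L j) (i : ℕ) :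
    segSum L (segIdx L i) ≤ i ∧ i < segSum L (segIdx L i + 1) := by
  have h0 : segSum L 0 ≤ i := by simp [segSum]
  have hspec : segSum L (segIdx L i) ≤ i :=
    Nat.findGreatest_spec (P := fun j => segSum L j ≤ i) (Nat.zero_le i) h0
  refine ⟨hspec, ?_⟩
  by_contra h
  push_neg at h
  have hk1 : segIdx L i + 1 ≤ i := le_trans (le_trans (segSum_ge hL _) h) (le_refl i)
  exact Nat.findGreatest_is_greatest (Nat.lt_succ_self _) hk1 h

lemma segIdx_eq {L : ℕ → ℕ} (hL : ∀ j, 1 ≤ L j) {j i : ℕ}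
    (h1 : segSum L j ≤ i) (h2 : i < segSum L (j + 1)) : segIdx L i = j := by
  have hge : j ≤ segIdx L i :=
    Nat.le_findGreatest (le_trans (segSum_ge hL j) h1) h1
  have hle : segIdx L i ≤ j := by
    by_contra h
    push_neg at h
    have : segSum L (j + 1) ≤ segSum L (segIdx L i) := segSum_mono h
    have := (segIdx_spec hL i).1
    omega
  omega

def glue (σ : ℕ → ℕ → X) (L : ℕ → ℕ) (i : ℕ) : X :=
  σ (segIdx L i) (i - segSum L (segIdx L i))

lemma glue_eval {σ : ℕ → ℕ → X} {L : ℕ → ℕ} (hL : ∀ j, 1 ≤ L j) {j i : ℕ} (hi : i < L j) :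
    glue σ L (segSum L j + i) = σ j i := by
  have h1 : segSum L j ≤ segSum L j + i := Nat.le_add_right _ _
  have h2 : segSum L j + i < segSum L (j + 1) := by simp only [segSum]; omega
  unfold glue
  rw [segIdx_eq hL h1 h2, Nat.add_sub_cancel_left]

lemma glue_pseudo {σ : ℕ → ℕ → X} {L : ℕ → ℕ} {D : Set (X × X)} (hL : ∀ j, 1 ≤ L j)
    (hint : ∀ j i, i + 1 < L j → (f (σ j i), σ j (i + 1)) ∈ D)
    (hglue : ∀ j, (f (σ j (L j - 1)), σ (j + 1) 0) ∈ D) :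
    ∀ i, (f (glue σ L i), glue σ L (i + 1)) ∈ D := by
  intro i
  obtain ⟨h1, h2⟩ := segIdx_spec hL i
  set j := segIdx L i with hjdef
  rcases Nat.lt_or_ge (i + 1) (segSum L (j + 1)) with hc | hc
  · have hidx : segIdx L (i + 1) = j := segIdx_eq hL (by omega) hc
    have hstep := hint j (i - segSum L j) (by
      have : segSum L (j+1) = segSum L j + L j := rfl
      omega)
    unfold glue
    rw [hidx, ← hjdef]
    have : i + 1 - segSum L j = (i - segSum L j) + 1 := by omega
    rw [this]
    exact hstep
  · have hieq : i + 1 = segSum L (j + 1) := by omega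
    have hidx : segIdx L (i + 1) = j + 1 := by
      refine segIdx_eq hL (by omega) ?_
      have : segSum L (j + 1 + 1) = segSum L (j+1) + L (j+1) := rfl
      have := hL (j + 1)
      omega
    unfold glue
    rw [hidx, ← hjdef]
    have hz : i + 1 - segSum L (j + 1) = 0 := by omega
    have hl : i - segSum L j = L j - 1 := by
      have : segSum L (j+1) = segSum L j + L j := rfl
      have := hL j
      omega
    rw [hz, hl]
    exact hglue j

end Concat
section Density

lemma lowerDensity_univ : lowerDensity (Set.univ : Set ℕ) = 1 := by
  unfold lowerDensity
  simp only [Set.mem_univ, Finset.filter_true_of_mem, Finset.card_range, implies_true]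
  have h : ∀ᶠ n : ℕ in Filter.atTop, (n : ℝ) / (n : ℝ) = 1 := by
    filter_upwards [Filter.eventually_gt_atTop 0] with n hn
    have : (n : ℝ) ≠ 0 := by positivity
    field_simp
  rw [Filter.liminf_congr h, Filter.liminf_const]

lemma thick_of_lowerDensity_one {A : Set ℕ} (hA : lowerDensity A = 1) : Thick A := by
  classical
  by_contra hth
  unfold Thick at hth
  push_neg at hth
  obtain ⟨n₀, hn₀⟩ := hth
  have hn₀pos : 0 < n₀ := by
    by_contra h
    obtain ⟨i, hi, _⟩ := hn₀ 0
    omega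
  choose ch hch1 hch2 using hn₀
  set g : ℕ → ℕ := fun j => j * n₀ + ch (j * n₀) with hgdef
  have hgdiv : ∀ j, g j / n₀ = j := fun j => by
    show (j * n₀ + ch (j * n₀)) / n₀ = j
    rw [Nat.add_comm, Nat.add_mul_div_right _ _ hn₀pos, Nat.div_eq_of_lt (hch1 _), Nat.zero_add]
  -- counting estimate
  have count : ∀ q : ℕ, (((Finset.range (q * n₀)).filter (· ∈ A)).card : ℕ) ≤ q * n₀ - q := by
    intro q
    set M : Finset ℕ := (Finset.range q).image g with hMdef
    have hMcard : M.card = q := by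
      rw [hMdef, Finset.card_image_of_injective _ ?_, Finset.card_range]
      intro a b hab
      have := congrArg (· / n₀) hab
      simpa [hgdiv] using this
    have hMsub : M ⊆ Finset.range (q * n₀) := by
      intro a ha
      rw [hMdef] at ha
      obtain ⟨j, hj, rfl⟩ := Finset.mem_image.mp ha
      rw [Finset.mem_range] at hj ⊢
      have := hch1 (j * n₀)
      calc j * n₀ + ch (j * n₀) < j * n₀ + n₀ := by omega
        _ = (j + 1) * n₀ := by ring
        _ ≤ q * n₀ := Nat.mul_le_mul_right _ (by omega)
    have hsub : (Finset.range (q * n₀)).filter (· ∈ A) ⊆ Finset.range (q * n₀) \ M := by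
      intro a ha
      rw [Finset.mem_filter] at ha
      rw [Finset.mem_sdiff]
      refine ⟨ha.1, ?_⟩
      intro haM
      rw [hMdef] at haM
      obtain ⟨j, _, rfl⟩ := Finset.mem_image.mp haM
      exact hch2 (j * n₀) ha.2
    calc ((Finset.range (q * n₀)).filter (· ∈ A)).card
        ≤ (Finset.range (q * n₀) \ M).card := Finset.card_le_card hsub
      _ = q * n₀ - q := by rw [Finset.card_sdiff_of_subset hMsub, Finset.card_range, hMcard]
  -- liminf bound
  set u : ℕ → ℝ := fun n => (((Finset.range n).filter (· ∈ A)).card : ℝ) / (n : ℝ) with hudef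
  have hub : lowerDensity A ≤ 1 - 1 / (n₀ : ℝ) := by
    rw [lowerDensity, Filter.liminf_eq]
    apply csSup_le
    · exact ⟨0, by filter_upwards with n; positivity⟩
    · intro a ha
      simp only [Set.mem_setOf_eq, Filter.eventually_atTop] at ha
      obtain ⟨N, hN⟩ := ha
      set q := N + 1 with hqdef
      have hq0 : 0 < q := by omega
      have hnn : N ≤ q * n₀ := by calc N ≤ q := by omega
                                      _ = q * 1 := (Nat.mul_one q).symm
                                      _ ≤ q * n₀ := Nat.mul_le_mul_left _ hn₀pos
      have h1 := hN (q * n₀) hnn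
      have h2 : (((Finset.range (q * n₀)).filter (· ∈ A)).card : ℝ) / ((q * n₀ : ℕ) : ℝ)
          ≤ 1 - 1 / (n₀ : ℝ) := by
        have hc := count q
        have hqn : (0:ℝ) < ((q * n₀ : ℕ) : ℝ) := by positivity
        rw [div_le_iff₀ hqn]
        have hcast : (((Finset.range (q * n₀)).filter (· ∈ A)).card : ℝ) ≤ (q * n₀ : ℕ) - (q:ℕ) := by
          have hle : (q : ℕ) ≤ q * n₀ := by calc q = q * 1 := (Nat.mul_one q).symm
                                                _ ≤ q * n₀ := Nat.mul_le_mul_left _ hn₀pos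
          calc (((Finset.range (q * n₀)).filter (· ∈ A)).card : ℝ) ≤ ((q * n₀ - q : ℕ) : ℝ) := by
                exact_mod_cast hc
            _ = ((q * n₀ : ℕ) : ℝ) - (q : ℕ) := by
                rw [Nat.cast_sub hle]
        calc (((Finset.range (q * n₀)).filter (· ∈ A)).card : ℝ)
            ≤ ((q * n₀ : ℕ) : ℝ) - (q : ℕ) := hcast
          _ = (1 - 1 / (n₀ : ℝ)) * ((q * n₀ : ℕ) : ℝ) := by
              have hn0 : (n₀ : ℝ) ≠ 0 := by positivity
              have hqr : (0:ℝ) < (q:ℝ) := by positivity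
              push_cast
              field_simp
      exact le_trans h1 h2
  rw [hA] at hub
  have : (0:ℝ) < 1 / (n₀ : ℝ) := by positivity
  linarith

end Density
section FourOne
set_option linter.unusedSectionVars false
variable {X : Type*} [UniformSpace X] [CompactSpace X] {f : X → X}

lemma finite_shadowing_of_four (hf : Continuous f) (hcr : CR f = Set.univ)
    (h4 : FGShadowing f {(Set.univ : Set ℕ)} thickFamily) :
    ∀ E ∈ uniformity X, ∃ D ∈ uniformity X,
      ∀ x : ℕ → X, PseudoOrbitOn f D x Set.univ →
        ∀ n : ℕ, ∃ y : X, ∀ i ≤ n, (f^[i] y, x i) ∈ E := by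
  intro E hE
  obtain ⟨D₁, hD₁, h4'⟩ := h4 E hE
  obtain ⟨D₂, hD₂, hD₂sub, hrev⟩ := chain_reverse hf hcr hD₁
  refine ⟨D₂, hD₂, ?_⟩
  intro x hx n
  rcases Nat.eq_zero_or_pos n with hn0 | hn0
  · subst hn0
    refine ⟨x 0, ?_⟩
    intro i hi
    have : i = 0 := by omega
    subst this
    exact refl_mem_uniformity hE
  · -- build a periodic pseudo orbit
    have hfront : COL f D₂ (x 0) (x n) n := ⟨x, rfl, rfl, fun i _ => hx i (Set.mem_univ i)⟩
    obtain ⟨m, hm, c', hc'0, hc'm, hc's⟩ := hrev (x 0) (x n) n hfront hn0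
    set p := n + m with hpdef
    have hp2 : 2 ≤ p := by omega
    set w : ℕ → X := fun j => if j ≤ n then x j else c' (j - n) with hwdef
    have hwp : w p = x 0 := by
      show (if p ≤ n then x p else c' (p - n)) = x 0
      rw [if_neg (by omega : ¬ (p ≤ n)), (by omega : p - n = m), hc'm]
    have hstep : ∀ j < p, (f (w j), w (j + 1)) ∈ D₁ := by
      intro j hj
      rcases Nat.lt_or_ge j n with hjn | hjn
      · have h1 : w j = x j := if_pos (by omega)
        have h2 : w (j + 1) = x (j + 1) := if_pos (by omega)
        rw [h1, h2]
        exact hD₂sub (hx j (Set.mem_univ j))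
      · have h1 : w j = c' (j - n) := by
          rcases Nat.eq_or_lt_of_le hjn with he | hl
          · rw [hwdef]
            simp only
            rw [if_pos (le_of_eq he.symm), ← he, Nat.sub_self, hc'0]
          · exact if_neg (by omega)
        have h2 : w (j + 1) = c' (j - n + 1) := by
          rw [hwdef]
          simp only
          rw [if_neg (by omega : ¬ (j + 1 ≤ n))]
          congr 1
          omega
        rw [h1, h2]
        exact hc's (j - n) (by omega)
    set z : ℕ → X := fun i => w (i % p) with hzdef
    have hzper : ∀ q i, i < p → z (q * p + i) = w i := by
      intro q i hi
      show w ((q * p + i) % p) = w i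
      rw [Nat.mul_comm q p, Nat.mul_add_mod, Nat.mod_eq_of_lt hi]
    have hzpo : PseudoOrbitOn f D₁ z Set.univ := by
      intro i _
      have hjlt : i % p < p := Nat.mod_lt _ (by omega)
      have hmod : (i + 1) % p = (i % p + 1) % p := (Nat.mod_add_mod i p 1).symm
      rcases Nat.lt_or_ge (i % p + 1) p with hc | hc
      · show (f (w (i % p)), w ((i + 1) % p)) ∈ D₁
        rw [hmod, Nat.mod_eq_of_lt hc]
        exact hstep _ hjlt
      · have hceq : i % p + 1 = p := by omega
        show (f (w (i % p)), w ((i + 1) % p)) ∈ D₁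
        have hw0 : w 0 = w p := by
          have h00 : w 0 = x 0 := if_pos (Nat.zero_le n)
          rw [h00, hwp]
        rw [hmod, hceq, Nat.mod_self, hw0]
        have hst := hstep (i % p) hjlt
        rwa [hceq] at hst
    obtain ⟨y, B, hB, htr⟩ := h4' z ⟨Set.univ, rfl, hzpo⟩
    obtain ⟨k, hk⟩ := hB (p + n + 1)
    set q := (k + p - 1) / p with hqdef
    set r := (k + p - 1) % p with hrdef
    have hqr : p * q + r = k + p - 1 := Nat.div_add_mod _ _
    have hrp : r < p := Nat.mod_lt _ (by omega)
    set a := p * q with hadef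
    have hak : k ≤ a ∧ a ≤ k + p - 1 := by omega
    refine ⟨f^[a] y, ?_⟩
    intro i hi
    have hiB : a + i ∈ B := by
      have hlt : a + i - k < p + n + 1 := by omega
      have := hk (a + i - k) hlt
      rwa [(by omega : k + (a + i - k) = a + i)] at this
    have h1 := htr (a + i) hiB
    have h2 : z (a + i) = x i := by
      have hz := hzper q i (by omega)
      have haq : a = q * p := by rw [hadef, Nat.mul_comm]
      rw [haq, hz]
      exact if_pos hi
    rw [h2] at h1
    rw [← Function.iterate_add_apply, Nat.add_comm i a]
    exact h1

lemma shadowing_of_finite (hf : Continuous f)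
    (FS : ∀ E ∈ uniformity X, ∃ D ∈ uniformity X,
      ∀ x : ℕ → X, PseudoOrbitOn f D x Set.univ →
        ∀ n : ℕ, ∃ y : X, ∀ i ≤ n, (f^[i] y, x i) ∈ E) :
    TopShadowing f := by
  intro E hE
  obtain ⟨E', ⟨hE'mem, hE'cl⟩, hE'sub⟩ := (uniformity_hasBasis_closed.mem_iff).mp hE
  obtain ⟨D, hD, hFS⟩ := FS E' hE'mem
  refine ⟨D, hD, ?_⟩
  intro x hx
  set K : ℕ → Set X := fun n => ⋂ i ∈ Finset.range (n + 1), (fun y => (f^[i] y, x i)) ⁻¹' E'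
    with hKdef
  have hdec : ∀ n, K (n + 1) ⊆ K n := by
    intro n y hy
    rw [hKdef, Set.mem_iInter₂] at hy ⊢
    intro i hi
    exact hy i (by rw [Finset.mem_range] at hi ⊢; omega)
  have hne : ∀ n, (K n).Nonempty := by
    intro n
    obtain ⟨y, hy⟩ := hFS x hx n
    refine ⟨y, ?_⟩
    rw [hKdef, Set.mem_iInter₂]
    intro i hi
    exact hy i (by rw [Finset.mem_range] at hi; omega)
  have hcl : ∀ n, IsClosed (K n) := by
    intro n
    refine isClosed_biInter fun i _ => ?_
    exact hE'cl.preimage ((hf.iterate i).prodMk continuous_const)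
  have hcp : IsCompact (K 0) := (hcl 0).isCompact
  obtain ⟨y, hy⟩ :=
    IsCompact.nonempty_iInter_of_sequence_nonempty_isCompact_isClosed K hdec hne hcp hcl
  refine ⟨y, ?_⟩
  intro i _
  have := Set.mem_iInter.mp hy i
  rw [hKdef] at this
  rw [Set.mem_iInter₂] at this
  exact hE'sub (this i (by rw [Finset.mem_range]; omega))

lemma four_implies_one (hf : Continuous f) (hcr : CR f = Set.univ)
    (h4 : FGShadowing f {(Set.univ : Set ℕ)} thickFamily) : TopShadowing f :=
  shadowing_of_finite hf (finite_shadowing_of_four hf hcr h4)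

end FourOne
section OneThree
set_option linter.unusedSectionVars false
set_option maxHeartbeats 1000000
variable {X : Type*} [UniformSpace X] [CompactSpace X] {f : X → X}

lemma one_implies_three (hf : Continuous f) (hsurj : Function.Surjective f)
    (hcr : CR f = Set.univ) (h1 : TopShadowing f) :
    FGShadowing f thickFamily thickFamily := by
  classical
  intro E hE
  obtain ⟨Dtr, hDtr, htrace⟩ := h1 E hE
  -- entourage tower
  obtain ⟨D1', hD1', hD1'c⟩ := comp_mem_uniformity_sets hDtr
  set D1 := D1' ∩ Dtr with hD1def
  have hD1 : D1 ∈ uniformity X := inter_mem hD1' hDtr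
  have hD1c : SetRel.comp D1 D1 ⊆ Dtr :=
    fun p hp => hD1'c (by obtain ⟨q, h1, h2⟩ := hp; exact ⟨q, h1.1, h2.1⟩)
  have hD1sub : D1 ⊆ Dtr := fun p hp => hp.2
  obtain ⟨D2', hD2', hD2'c⟩ := comp_mem_uniformity_sets hD1
  set D2 := D2' ∩ D1 with hD2def
  have hD2 : D2 ∈ uniformity X := inter_mem hD2' hD1
  have hD2c : SetRel.comp D2 D2 ⊆ D1 :=
    fun p hp => hD2'c (by obtain ⟨q, h1, h2⟩ := hp; exact ⟨q, h1.1, h2.1⟩)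
  have hD2sub : D2 ⊆ D1 := fun p hp => hp.2
  obtain ⟨Drev, hDrev, hDrevsub, hrev⟩ := chain_reverse hf hcr hD2
  have hUC : UniformContinuous f := CompactSpace.uniformContinuous_of_continuous hf
  have hWmem : {p : X × X | (f p.1, f p.2) ∈ D2} ∈ uniformity X := hUC hD2
  set D3 := SetRel.symmetrize (Drev ∩ {p : X × X | (f p.1, f p.2) ∈ D2}) with hD3def
  have hD3 : D3 ∈ uniformity X := symmetrize_mem_uniformity (inter_mem hDrev hWmem)
  have hD3sym : ∀ {p q : X}, (p, q) ∈ D3 → (q, p) ∈ D3 :=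
    fun h => ⟨h.2, h.1⟩
  have hD3rev : D3 ⊆ Drev := fun p hp => (SetRel.symmetrize_subset_self hp).1
  have hD3UC : ∀ {p q : X}, (p, q) ∈ D3 → (f p, f q) ∈ D2 :=
    fun hp => (SetRel.symmetrize_subset_self hp).2
  have hD3D2 : D3 ⊆ D2 := fun p hp => hDrevsub (hD3rev hp)
  have hD3Dtr : D3 ⊆ Dtr := fun p hp => hD1sub (hD2sub (hD3D2 hp))
  -- loop data at every point
  have hvdata : ∀ v : X, ∃ m N : ℕ, 0 < m ∧ (∀ l, 1 ≤ l → COL f D1 v v l → m ∣ l) ∧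
      ∀ t, N ≤ t → 1 ≤ t → COL f D1 v v (t * m) := by
    intro v
    set Sv : Set ℕ := {l | l = 0 ∨ COL f D1 v v l} with hSvdef
    have h0 : 0 ∈ Sv := Or.inl rfl
    have hadd : ∀ a ∈ Sv, ∀ b ∈ Sv, a + b ∈ Sv := by
      rintro a (rfl | ha) b hb
      · simpa using hb
      · rcases hb with rfl | hb
        · exact Or.inr ha
        · exact Or.inr (ha.concat hb)
    have hvCR : v ∈ CR f := by rw [hcr]; exact Set.mem_univ v
    obtain ⟨n₀, hn₀, hcol₀⟩ := dchain_iff_col.mp (hvCR D1 hD1)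
    obtain ⟨m, N, hm, hdvd, hmult⟩ := nat_semigroup h0 hadd (Or.inr hcol₀) (by omega)
    refine ⟨m, N, hm, fun l hl hcol => hdvd l (Or.inr hcol), ?_⟩
    intro t ht ht1
    have := hmult t ht
    rcases this with h | h
    · exfalso
      have hpos : 0 < t * m := Nat.mul_pos (by omega) hm
      omega
    · exact h
  choose mfun Nfun hmpos hmdvd hmloop using hvdata
  -- total boundedness
  obtain ⟨C, hCfin, hCcov⟩ := isCompact_univ.totallyBounded D3 hD3
  set M := ∏ v ∈ hCfin.toFinset, mfun v with hMdef
  have hMpos : 0 < M := Finset.prod_pos (fun v _ => hmpos v)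
  have hMdvd : ∀ v ∈ C, mfun v ∣ M :=
    fun v hv => Finset.dvd_prod_of_mem _ (hCfin.mem_toFinset.mpr hv)
  refine ⟨D3, hD3, ?_⟩
  rintro x ⟨A, hA, hxpo⟩
  have hAthick : Thick A := hA
  -- blocks with large starting points
  have hblocks : ∀ n : ℕ, ∃ s : ℕ, n ≤ s ∧ ∀ i < n, s + i ∈ A := by
    intro n
    obtain ⟨k, hk⟩ := hAthick (2 * n)
    refine ⟨max k n, le_max_right _ _, ?_⟩
    intro i hi
    have h1 : max k n + i = k + (max k n - k + i) := by omega
    rw [h1]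
    exact hk _ (by omega)
  choose sfun hsge hsA using hblocks
  -- ball centers
  have hball : ∀ n : ℕ, ∃ w, w ∈ C ∧ (x (sfun n), w) ∈ D3 := by
    intro n
    have := hCcov (Set.mem_univ (x (sfun n)))
    simpa using this
  choose bfun hbC hbD3 using hball
  -- pigeonhole
  haveI : Finite ↥(C ×ˢ Set.Iio M) := (hCfin.prod (Set.finite_Iio M)).to_subtype
  set κ : ℕ → ↥(C ×ˢ Set.Iio M) :=
    fun n => ⟨(bfun n, sfun n % M), Set.mk_mem_prod (hbC n) (Nat.mod_lt _ hMpos)⟩ with hκdef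
  obtain ⟨c₀, hc₀⟩ := Finite.exists_infinite_fiber κ
  have hIinf : (κ ⁻¹' {c₀}).Infinite := Set.infinite_coe_iff.mp hc₀
  set v := (c₀ : X × ℕ).1 with hvdef
  set ρ := (c₀ : X × ℕ).2 with hρdef
  have hvC : v ∈ C := c₀.2.1
  have hfiber : ∀ n ∈ κ ⁻¹' {c₀}, bfun n = v ∧ sfun n % M = ρ := by
    intro n hn
    have : κ n = c₀ := hn
    have hval : ((bfun n, sfun n % M) : X × ℕ) = (v, ρ) := congrArg Subtype.val this
    exact ⟨(Prod.mk.injEq _ _ _ _).mp hval |>.1, (Prod.mk.injEq _ _ _ _).mp hval |>.2⟩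
  set m := mfun v with hmdef
  set N := Nfun v with hNdef
  have hm0 : 0 < m := hmpos v
  have hmM : m ∣ M := hMdvd v hvC
  -- picking elements of the fiber
  have hIunb : ∀ b : ℕ, ∃ n, n ∈ κ ⁻¹' {c₀} ∧ b < n := by
    intro b
    obtain ⟨a, ha, hb⟩ := hIinf.exists_gt b
    exact ⟨a, ha, hb⟩
  choose pick hpickI hpickgt using hIunb
  -- reversal lengths
  have hrevlen : ∀ n : ℕ, ∃ R, 2 ≤ n →
      1 ≤ R ∧ COL f D2 (x (sfun n + (n - 1))) (x (sfun n)) R := by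
    intro n
    by_cases hn : 2 ≤ n
    · have hcolb : COL f Drev (x (sfun n)) (x (sfun n + (n - 1))) (n - 1) :=
        ⟨fun i => x (sfun n + i), by simp, rfl,
          fun i hi => hD3rev (hxpo _ (hsA n i (by omega)))⟩
      obtain ⟨R, hR1, hRcol⟩ := hrev _ _ _ hcolb (by omega)
      exact ⟨R, fun _ => ⟨hR1, hRcol⟩⟩
    · exact ⟨0, fun h => absurd h hn⟩
  choose Rlen hRlen using hrevlen
  -- the recursive selection of blocks
  set ν : ℕ → ℕ := fun j => Nat.rec (pick 1)
    (fun _ prev => pick (sfun prev + prev + Rlen prev + (N + 2) * M + 2)) j with hνdef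
  have hν0 : ν 0 = pick 1 := rfl
  have hνs : ∀ j, ν (j + 1) = pick (sfun (ν j) + ν j + Rlen (ν j) + (N + 2) * M + 2) :=
    fun j => rfl
  have hνI : ∀ j, ν j ∈ κ ⁻¹' {c₀} := by
    intro j
    cases j with
    | zero => exact hpickI 1
    | succ j => exact hpickI _
  have hν2 : ∀ j, 2 ≤ ν j := by
    intro j
    cases j with
    | zero => have := hpickgt 1; omega
    | succ j => have := hpickgt (sfun (ν j) + ν j + Rlen (ν j) + (N + 2) * M + 2); rw [hνs]; omega
  set kf : ℕ → ℕ := fun j => sfun (ν j) with hkfdef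
  set ef : ℕ → ℕ := fun j => kf j + (ν j - 1) with hefdef
  have hkν : ∀ j, ν j ≤ kf j := fun j => hsge (ν j)
  have hgap : ∀ j, kf j + ν j + Rlen (ν j) + (N + 2) * M + 2 ≤ kf (j + 1) := by
    intro j
    have h1 := hpickgt (sfun (ν j) + ν j + Rlen (ν j) + (N + 2) * M + 2)
    have h2 : ν (j + 1) ≤ kf (j + 1) := hkν (j + 1)
    rw [hνs] at h2
    have hkfj : kf j = sfun (ν j) := rfl
    omega
  have hνlt : ∀ j, ν j < ν (j + 1) := by
    intro j
    have h1 := hpickgt (sfun (ν j) + ν j + Rlen (ν j) + (N + 2) * M + 2)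
    rw [hνs]
    omega
  have hνge : ∀ j, j + 2 ≤ ν j := by
    intro j
    induction j with
    | zero => exact hν2 0
    | succ j ih => have := hνlt j; omega
  -- basic data per block
  have hR : ∀ j, 1 ≤ Rlen (ν j) ∧ COL f D2 (x (ef j)) (x (kf j)) (Rlen (ν j)) :=
    fun j => hRlen (ν j) (hν2 j)
  have hxballs : ∀ j, (x (kf j), v) ∈ D3 := by
    intro j
    have := hbD3 (ν j)
    rwa [(hfiber _ (hνI j)).1] at this
  have hkmod : ∀ j, kf j % M = ρ := fun j => (hfiber _ (hνI j)).2
  -- divisibility of block + reversal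
  have hloopdvd : ∀ j, m ∣ (ν j - 1) + Rlen (ν j) := by
    intro j
    have hblockchain : COL f D2 (x (kf j)) (x (ef j)) (ν j - 1) :=
      ⟨fun i => x (kf j + i), by simp, rfl,
        fun i hi => hD3D2 (hxpo _ (hsA (ν j) i (by omega)))⟩
    have hloop : COL f D2 (x (kf j)) (x (kf j)) ((ν j - 1) + Rlen (ν j)) :=
      hblockchain.concat (hR j).2
    have hl2 : 2 ≤ (ν j - 1) + Rlen (ν j) := by
      have := hν2 j; have := (hR j).1; omega
    have hlooprel : COL f D1 v v ((ν j - 1) + Rlen (ν j)) := by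
      refine bridge_general hD2c hD2sub hl2 hloop ?_ ?_
      · exact hD3UC (hD3sym (hxballs j))
      · exact hD3D2 (hxballs j)
    exact hmdvd v _ (by omega) hlooprel
  -- connector chains
  set gf : ℕ → ℕ := fun j => kf (j + 1) - ef j with hgfdef
  have hgf2 : ∀ j, Rlen (ν j) + 2 ≤ gf j := by
    intro j
    have := hgap j
    have := hν2 j
    have h2 : (N + 2) * M ≥ 0 := Nat.zero_le _
    show Rlen (ν j) + 2 ≤ kf (j + 1) - ef j
    have hef : ef j = kf j + (ν j - 1) := rfl
    omega
  have hconn : ∀ j : ℕ, ∃ γ : ℕ → X, γ 0 = x (ef j) ∧ γ (gf j) = x (kf (j + 1)) ∧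
      ∀ i < gf j, (f (γ i), γ (i + 1)) ∈ Dtr := by
    intro j
    set l := gf j - Rlen (ν j) with hldef
    -- m divides l
    have hdl : m ∣ l := by
      have h1 : m ∣ kf (j + 1) - kf j := by
        have hle : kf j ≤ kf (j + 1) := by have := hgap j; omega
        have : kf j ≡ kf (j + 1) [MOD M] := by
          unfold Nat.ModEq
          rw [hkmod j, hkmod (j + 1)]
        exact dvd_trans hmM ((Nat.modEq_iff_dvd' hle).mp this)
      have h2 : m ∣ (ν j - 1) + Rlen (ν j) := hloopdvd j
      have hl_eq : l = (kf (j + 1) - kf j) - ((ν j - 1) + Rlen (ν j)) := by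
        have := hgap j
        have hef : ef j = kf j + (ν j - 1) := rfl
        have hgfe : gf j = kf (j + 1) - ef j := rfl
        omega
      rw [hl_eq]
      exact Nat.dvd_sub h1 h2
    set t := l / m with htdef
    have htm : t * m = l := Nat.div_mul_cancel hdl
    have hlge : (N + 2) * m + 2 ≤ l := by
      have h1 := hgap j
      have h2 : (N + 2) * m ≤ (N + 2) * M := Nat.mul_le_mul_left _ (Nat.le_of_dvd hMpos hmM)
      have hef : ef j = kf j + (ν j - 1) := rfl
      have hgfe : gf j = kf (j + 1) - ef j := rfl
      have := hν2 j
      omega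
    have htge : N + 2 ≤ t := by
      rw [htdef, Nat.le_div_iff_mul_le hm0]
      omega
    have htm2 : 2 ≤ t * m := by
      calc 2 ≤ t := by omega
        _ = t * 1 := (Nat.mul_one t).symm
        _ ≤ t * m := Nat.mul_le_mul_left _ hm0
    -- the loop at v of length t * m
    have hloop : COL f D1 v v (t * m) := hmloop v t (by omega) (by omega)
    -- bridge from x (kf j) to x (kf (j+1))
    have hbridge : COL f Dtr (x (kf j)) (x (kf (j + 1))) (t * m) := by
      refine bridge_general hD1c hD1sub htm2 hloop ?_ ?_
      · exact hD2sub (hD3UC (hxballs j))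
      · exact hD2sub (hD3D2 (hD3sym (hxballs (j + 1))))
    -- full connector
    have hfull : COL f Dtr (x (ef j)) (x (kf (j + 1))) (Rlen (ν j) + t * m) :=
      ((hR j).2.mono (fun p hp => hD1sub (hD2sub hp))).concat hbridge
    have hlen : Rlen (ν j) + t * m = gf j := by
      rw [htm]
      have := hgf2 j
      omega
    rw [hlen] at hfull
    obtain ⟨γ, hγ0, hγg, hγs⟩ := hfull
    exact ⟨γ, hγ0, hγg, hγs⟩
  choose γf hγ0 hγg hγs using hconn
  -- backward orbit
  obtain ⟨u, hu0, hus⟩ : ∃ u : ℕ → X, u 0 = x (kf 0) ∧ ∀ i, f (u (i + 1)) = u i := by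
    refine ⟨fun i => Nat.rec (x (kf 0)) (fun _ p => Classical.choose (hsurj p)) i, rfl, ?_⟩
    intro i
    exact Classical.choose_spec (hsurj _)
  -- segments
  set L : ℕ → ℕ := fun idx => Nat.casesOn idx (kf 0) (fun j => kf (j + 1) - kf j) with hLdef
  set σ : ℕ → ℕ → X := fun idx => Nat.casesOn idx (fun i => u (kf 0 - i))
    (fun j i => if i ≤ ν j - 1 then x (kf j + i) else γf j (i - (ν j - 1))) with hσdef
  have hL0 : L 0 = kf 0 := rfl
  have hLs : ∀ j, L (j + 1) = kf (j + 1) - kf j := fun j => rfl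
  have hkf0pos : 2 ≤ kf 0 := le_trans (hν2 0) (hkν 0)
  have hLpos : ∀ idx, 1 ≤ L idx := by
    intro idx
    cases idx with
    | zero => rw [hL0]; omega
    | succ j => rw [hLs]; have := hgap j; omega
  have hLsplit : ∀ j, L (j + 1) = (ν j - 1) + gf j := by
    intro j
    rw [hLs]
    have := hgap j
    have hef : ef j = kf j + (ν j - 1) := rfl
    have hgfe : gf j = kf (j + 1) - ef j := rfl
    have := hν2 j
    omega
  -- values of σ on the tail part
  have hσtail : ∀ j i, ν j - 1 ≤ i → σ (j + 1) i = γf j (i - (ν j - 1)) := by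
    intro j i hi
    show (if i ≤ ν j - 1 then x (kf j + i) else γf j (i - (ν j - 1))) = γf j (i - (ν j - 1))
    rcases Nat.eq_or_lt_of_le hi with he | hl
    · rw [if_pos (le_of_eq he.symm), ← he, Nat.sub_self, hγ0 j]
    · rw [if_neg (by omega)]
  have hσhead : ∀ j i, i ≤ ν j - 1 → σ (j + 1) i = x (kf j + i) := by
    intro j i hi
    exact if_pos hi
  -- internal steps
  have hint : ∀ idx i, i + 1 < L idx → (f (σ idx i), σ idx (i + 1)) ∈ Dtr := by
    intro idx i hi
    cases idx with
    | zero =>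
      rw [hL0] at hi
      show (f (u (kf 0 - i)), u (kf 0 - (i + 1))) ∈ Dtr
      have h1 : kf 0 - i = (kf 0 - (i + 1)) + 1 := by omega
      rw [h1, hus]
      exact refl_mem_uniformity hDtr
    | succ j =>
      rw [hLsplit j] at hi
      rcases Nat.lt_or_ge (i + 1) (ν j) with hc | hc
      · rw [hσhead j i (by omega), hσhead j (i + 1) (by omega)]
        exact hD3Dtr (hxpo _ (hsA (ν j) i (by omega)))
      · have hi1 : ν j - 1 ≤ i := by omega
        rw [hσtail j i hi1, hσtail j (i + 1) (by omega)]
        have h2 : i + 1 - (ν j - 1) = (i - (ν j - 1)) + 1 := by omega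
        rw [h2]
        exact hγs j _ (by omega)
  -- glue steps
  have hglue : ∀ idx, (f (σ idx (L idx - 1)), σ (idx + 1) 0) ∈ Dtr := by
    intro idx
    cases idx with
    | zero =>
      rw [hL0]
      show (f (u (kf 0 - (kf 0 - 1))), σ 1 0) ∈ Dtr
      have h1 : kf 0 - (kf 0 - 1) = 0 + 1 := by omega
      rw [h1, hus 0, hu0]
      have h2 : σ 1 0 = x (kf 0 + 0) := hσhead 0 0 (Nat.zero_le _)
      rw [h2, Nat.add_zero]
      exact refl_mem_uniformity hDtr
    | succ j =>
      have hLgt : ν j - 1 ≤ L (j + 1) - 1 := by rw [hLsplit j]; have := hgf2 j; omega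
      rw [hσtail j _ hLgt]
      have h1 : L (j + 1) - 1 - (ν j - 1) = gf j - 1 := by
        rw [hLsplit j]; have := hgf2 j; omega
      rw [h1]
      have h2 : σ (j + 2) 0 = x (kf (j + 1) + 0) := hσhead (j + 1) 0 (Nat.zero_le _)
      rw [h2, Nat.add_zero, ← hγg j]
      have h3 : gf j = (gf j - 1) + 1 := by have := hgf2 j; omega
      rw [h3]
      exact hγs j _ (by omega)
  -- the glued pseudo orbit
  set z : ℕ → X := glue σ L with hzdef
  have hzpo : PseudoOrbitOn f Dtr z Set.univ := by
    intro i _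
    exact glue_pseudo hLpos hint hglue i
  obtain ⟨y, hy⟩ := htrace z hzpo
  -- partial sums hit the block starts
  have hT : ∀ j, segSum L (j + 1) = kf j := by
    intro j
    induction j with
    | zero =>
      have h1 : segSum L 1 = segSum L 0 + L 0 := rfl
      rw [h1, hL0]
      show 0 + kf 0 = kf 0
      omega
    | succ j ih =>
      have hstep : segSum L (j + 1 + 1) = segSum L (j + 1) + L (j + 1) := rfl
      rw [hstep, ih, hLs]
      have := hgap j
      omega
  -- the tracing set
  set B : Set ℕ := {i | ∃ j, kf j ≤ i ∧ i ≤ ef j} with hBdef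
  have hBthick : Thick B := by
    intro n
    refine ⟨kf n, ?_⟩
    intro i hi
    refine ⟨n, Nat.le_add_right _ _, ?_⟩
    show kf n + i ≤ kf n + (ν n - 1)
    have := hνge n
    omega
  refine ⟨y, B, hBthick, ?_⟩
  intro i hiB
  obtain ⟨j, hj1, hj2⟩ := hiB
  set d := i - kf j with hddef
  have hd : d ≤ ν j - 1 := by
    have hef : ef j = kf j + (ν j - 1) := rfl
    omega
  have hdL : d < L (j + 1) := by
    rw [hLsplit j]
    have := hgf2 j
    omega
  have hzi : z i = x i := by
    have h1 : i = segSum L (j + 1) + d := by rw [hT j]; omega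
    rw [h1, hzdef, glue_eval hLpos hdL, hσhead j d hd]
    congr 1
    omega
  have := hy i (Set.mem_univ i)
  rwa [hzi] at this

end OneThree
/-- for a chain recurrent compact dynamical system, topological shadowing,
(𝒟, F_t)-shadowing, (F_t, F_t)-shadowing and (ℕ, F_t)-shadowing are equivalent. -/
theorem shadowing_tfae_of_chainRecurrent
    {X : Type*} [UniformSpace X] [CompactSpace X]
    (f : X → X) (hf : Continuous f) (hsurj : Function.Surjective f)
    (hcr : CR f = Set.univ) :
    List.TFAE
      [TopShadowing f,
       FGShadowing f densityOneFamily thickFamily,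
       FGShadowing f thickFamily thickFamily,
       FGShadowing f {(Set.univ : Set ℕ)} thickFamily] := by
  tfae_have 1 → 3 := fun h => one_implies_three hf hsurj hcr h
  tfae_have 3 → 2 := by
    intro h3 E hE
    obtain ⟨D, hD, hh⟩ := h3 E hE
    refine ⟨D, hD, ?_⟩
    rintro x ⟨A, hA, hpo⟩
    exact hh x ⟨A, thick_of_lowerDensity_one hA, hpo⟩
  tfae_have 2 → 4 := by
    intro h2 E hE
    obtain ⟨D, hD, hh⟩ := h2 E hE
    refine ⟨D, hD, ?_⟩
    rintro x ⟨A, hA, hpo⟩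
    have hAu : A = Set.univ := hA
    subst hAu
    exact hh x ⟨Set.univ, lowerDensity_univ, hpo⟩
  tfae_have 4 → 1 := fun h => four_implies_one hf hcr h
  tfae_finish
end

section
/- Let (X, f) be a dynamical system, where X is a compact uniform space and f : X → X is a continuous surjection, and suppose f is chain recurrent, i.e., CR(f) = X. If f has topological (ℕ, F_t)-shadowing (that is, for every entourage E there is an entourage D such that every D-pseudo orbit is E-traced by some point of X on some thick set), then f has topological shadowing. -/
open Filter Set Function

section ProofHelpers

variable {X : Type*} [UniformSpace X]

/-- Concatenation of raw chains. -/
lemma rawChain_append {f : X → X} {D : Set (X × X)} {n m : ℕ}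
    {c c' : ℕ → X} (hcc' : c n = c' 0)
    (hc : ∀ i < n, (f (c i), c (i + 1)) ∈ D)
    (hc' : ∀ i < m, (f (c' i), c' (i + 1)) ∈ D) :
    ∃ c'' : ℕ → X, c'' 0 = c 0 ∧ c'' (n + m) = c' m ∧
      ∀ i < n + m, (f (c'' i), c'' (i + 1)) ∈ D := by
  refine ⟨fun i => if i ≤ n then c i else c' (i - n), by simp, ?_, ?_⟩
  · by_cases hm : m = 0
    · subst hm; simp [hcc']
    · simp only [show ¬ (n + m ≤ n) by omega, if_false]
      congr 1; omega
  · intro i hi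
    rcases lt_or_ge i n with h | h
    · simp only [show i ≤ n by omega, show i + 1 ≤ n by omega, if_true]
      exact hc i h
    · have h1 : ¬ (i + 1 ≤ n) := by omega
      have h2 : (if i ≤ n then c i else c' (i - n)) = c' (i - n) := by
        rcases eq_or_lt_of_le h with rfl | h'
        · simp [hcc']
        · simp [show ¬ (i ≤ n) by omega]
      simp only [h1, if_false, h2]
      have : i + 1 - n = (i - n) + 1 := by omega
      rw [this]
      exact hc' (i - n) (by omega)

lemma dchain_trans {f : X → X} {D : Set (X × X)} {x y z : X}
    (h1 : DChain f D x y) (h2 : DChain f D y z) : DChain f D x z := by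
  obtain ⟨n, hn, c, hc0, hcn, hc⟩ := h1
  obtain ⟨m, hm, c', hc'0, hc'm, hc'⟩ := h2
  obtain ⟨c'', h0, hnm, hstep⟩ := rawChain_append (by rw [hcn, hc'0]) hc hc'
  exact ⟨n + m, by omega, c'', by rw [h0, hc0], by rw [hnm, hc'm], hstep⟩

/-- From a loop one gets a loop of length at least `2`. -/
lemma loop_double {f : X → X} {D : Set (X × X)} {a : X} (h : DChain f D a a) :
    ∃ m, 2 ≤ m ∧ ∃ c : ℕ → X, c 0 = a ∧ c m = a ∧ ∀ i < m, (f (c i), c (i + 1)) ∈ D := by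
  obtain ⟨n, hn, c, h0, hn', hc⟩ := h
  obtain ⟨c'', h0'', hm'', hc''⟩ := rawChain_append (by rw [hn', h0]) hc hc
  exact ⟨n + n, by omega, c'', by rw [h0'', h0], by rw [hm'', hn'], hc''⟩

/-- One-step reversal: if `b` is a `D₀`-successor of `a` and `a` has a `D₀`-loop,
then there is a `D`-chain from `b` back to `a`. -/
lemma step_reverse {f : X → X} {D D₀ U V : Set (X × X)}
    (hUf : ∀ p ∈ U, (f p.1, f p.2) ∈ V)
    (hsymm : ∀ x y : X, (x, y) ∈ D₀ → (y, x) ∈ D₀)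
    (hD₀U : ∀ x y z : X, (x, y) ∈ D₀ → (y, z) ∈ D₀ → (x, z) ∈ U)
    (hVD : ∀ x y z : X, (x, y) ∈ V → (y, z) ∈ D₀ → (x, z) ∈ D)
    (hD₀D : D₀ ⊆ D)
    {a b : X} (hab : (f a, b) ∈ D₀) (hloop : DChain f D₀ a a) :
    DChain f D b a := by
  obtain ⟨m, hm, e, he0, hem, he⟩ := loop_double hloop
  have hstep0 : (f a, e 1) ∈ D₀ := by
    have := he 0 (by omega); rwa [he0] at this
  have h1 : (b, e 1) ∈ U := hD₀U _ _ _ (hsymm _ _ hab) hstep0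
  have h2 : (f b, f (e 1)) ∈ V := hUf _ h1
  have h3 : (f b, e 2) ∈ D := hVD _ _ _ h2 (he 1 (by omega))
  refine ⟨m - 1, by omega, fun j => if j = 0 then b else e (j + 1), by simp, ?_, ?_⟩
  · simp only [show ¬ (m - 1 = 0) by omega, if_false]
    have : m - 1 + 1 = m := by omega
    rw [this, hem]
  · intro j hj
    rcases Nat.eq_zero_or_pos j with rfl | hjpos
    · simpa using h3
    · simp only [show ¬ (j = 0) by omega, show ¬ (j + 1 = 0) by omega, if_false]
      exact hD₀D (he (j + 1) (by omega))

/-- Reversal of a `D₀`-chain into a `D`-chain, assuming every point has a `D₀`-loop. -/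
lemma chain_reverse_s5 {f : X → X} {D D₀ U V : Set (X × X)}
    (hUf : ∀ p ∈ U, (f p.1, f p.2) ∈ V)
    (hsymm : ∀ x y : X, (x, y) ∈ D₀ → (y, x) ∈ D₀)
    (hD₀U : ∀ x y z : X, (x, y) ∈ D₀ → (y, z) ∈ D₀ → (x, z) ∈ U)
    (hVD : ∀ x y z : X, (x, y) ∈ V → (y, z) ∈ D₀ → (x, z) ∈ D)
    (hD₀D : D₀ ⊆ D)
    (hcr : ∀ a : X, DChain f D₀ a a)
    {c : ℕ → X} (hc : ∀ i, (f (c i), c (i + 1)) ∈ D₀) :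
    ∀ n, 1 ≤ n → DChain f D (c n) (c 0) := by
  intro n hn
  induction n with
  | zero => omega
  | succ n ih =>
    have last : DChain f D (c (n + 1)) (c n) :=
      step_reverse hUf hsymm hD₀U hVD hD₀D (hc n) (hcr (c n))
    rcases Nat.eq_zero_or_pos n with rfl | hpos
    · exact last
    · exact dchain_trans last (ih hpos)

end ProofHelpers

/-- for a chain recurrent system, topological (ℕ, F_t)-shadowing implies
topological shadowing. -/
theorem shadowing_of_nat_thick_shadowing
    {X : Type*} [UniformSpace X] [CompactSpace X]
    (f : X → X) (hf : Continuous f) (hsurj : Function.Surjective f)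
    (hcr : CR f = Set.univ)
    (h : ∀ E ∈ uniformity X, ∃ D ∈ uniformity X,
      ∀ x : ℕ → X, PseudoOrbitOn f D x Set.univ →
        ∃ y : X, ∃ B : Set ℕ, Thick B ∧ TracedOn f E x y B) :
    TopShadowing f := by
  intro E hE
  obtain ⟨E₂, ⟨hE₂u, hE₂c⟩, hE₂E⟩ := (uniformity_hasBasis_closed.mem_iff.mp hE)
  obtain ⟨D, hDu, hD⟩ := h E₂ hE₂u
  have hufc : UniformContinuous f := CompactSpace.uniformContinuous_of_continuous hf
  obtain ⟨V, hVu, hVsymm, hVD⟩ := comp_symm_mem_uniformity_sets hDu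
  have hUu : (fun p : X × X => (f p.1, f p.2)) ⁻¹' V ∈ uniformity X := hufc hVu
  set U := (fun p : X × X => (f p.1, f p.2)) ⁻¹' V with hU
  obtain ⟨D₀, hD₀u, hD₀symm, hD₀comp⟩ :=
    comp_symm_mem_uniformity_sets (Filter.inter_mem (Filter.inter_mem hUu hDu) hVu)
  have hD₀refl : ∀ z : X, (z, z) ∈ D₀ := fun z => refl_mem_uniformity hD₀u
  have hD₀sub : D₀ ⊆ (U ∩ D) ∩ V := fun p hp => by
    have : (p.1, p.2) ∈ SetRel.comp D₀ D₀ := ⟨p.2, hp, hD₀refl p.2⟩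
    exact hD₀comp this
  have hD₀D : D₀ ⊆ D := fun p hp => (hD₀sub hp).1.2
  have hD₀V : D₀ ⊆ V := fun p hp => (hD₀sub hp).2
  have hUf : ∀ p ∈ U, (f p.1, f p.2) ∈ V := fun p hp => hp
  have hsymm : ∀ x y : X, (x, y) ∈ D₀ → (y, x) ∈ D₀ := fun x y hxy =>
    hD₀symm.symm x y hxy
  have hD₀U : ∀ x y z : X, (x, y) ∈ D₀ → (y, z) ∈ D₀ → (x, z) ∈ U := fun x y z h1 h2 =>
    (hD₀comp (⟨y, h1, h2⟩ : (x, z) ∈ SetRel.comp D₀ D₀)).1.1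
  have hVDcomp : ∀ x y z : X, (x, y) ∈ V → (y, z) ∈ D₀ → (x, z) ∈ D := fun x y z h1 h2 =>
    hVD ⟨y, h1, hD₀V h2⟩
  refine ⟨D₀, hD₀u, ?_⟩
  intro x hx
  have hxstep : ∀ i, (f (x i), x (i + 1)) ∈ D₀ := fun i => hx i (Set.mem_univ i)
  have hcrD : ∀ a : X, DChain f D₀ a a := fun a => by
    have ha : a ∈ CR f := by rw [hcr]; exact Set.mem_univ a
    exact ha D₀ hD₀u
  -- finite tracing
  have key : ∀ n : ℕ, ∃ z : X, ∀ i ≤ n, (f^[i] z, x i) ∈ E₂ := by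
    intro n
    obtain ⟨p, hpn, w, hw, hwp, hwstep⟩ :
        ∃ p, n < p ∧ ∃ w : ℕ → X, (∀ j ≤ n, w j = x j) ∧ w p = w 0 ∧
          ∀ j < p, (f (w j), w (j + 1)) ∈ D := by
      rcases Nat.eq_zero_or_pos n with rfl | hn1
      · obtain ⟨m, hm, c, h0, hm', hc⟩ := hcrD (x 0)
        refine ⟨m, by omega, c, fun j hj => ?_, by rw [hm', h0], fun j hj => hD₀D (hc j hj)⟩
        · have : j = 0 := by omega
          rw [this, h0]
      · have hrev : DChain f D (x n) (x 0) :=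
          chain_reverse_s5 hUf hsymm hD₀U hVDcomp hD₀D hcrD hxstep n hn1
        obtain ⟨q, hq, g, hg0, hgq, hg⟩ := hrev
        refine ⟨n + q, by omega, fun j => if j ≤ n then x j else g (j - n),
          fun j hj => by simp [hj], ?_, ?_⟩
        · simp only [show ¬ (n + q ≤ n) by omega, if_false, show (0:ℕ) ≤ n by omega, if_true]
          rw [show n + q - n = q from by omega, hgq]
        · intro j hj
          rcases lt_trichotomy j n with hlt | heq | hgt
          · simp only [show j ≤ n by omega, show j + 1 ≤ n by omega, if_true]
            exact hD₀D (hxstep j)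
          · subst heq
            simp only [le_refl, if_true, show ¬ (j + 1 ≤ j) by omega, if_false,
              show j + 1 - j = 1 from by omega]
            have := hg 0 (by omega)
            rwa [hg0] at this
          · simp only [show ¬ (j ≤ n) by omega, show ¬ (j + 1 ≤ n) by omega, if_false]
            rw [show j + 1 - n = (j - n) + 1 from by omega]
            exact hg (j - n) (by omega)
    have hp0 : 0 < p := by omega
    set x' : ℕ → X := fun i => w (i % p) with hx'def
    have hx' : PseudoOrbitOn f D x' Set.univ := by
      intro i _
      have hr : i % p < p := Nat.mod_lt i hp0
      have e1 : (i + 1) % p = (i % p + 1) % p := by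
        conv_lhs => rw [← Nat.mod_add_div i p]
        rw [Nat.add_right_comm]
        exact Nat.add_mul_mod_self_left _ _ _
      show (f (w (i % p)), w ((i + 1) % p)) ∈ D
      rcases eq_or_lt_of_le (Nat.succ_le_of_lt hr) with hcase | hcase
      · have hcase' : i % p + 1 = p := hcase
        have h2 := hwstep _ hr
        rw [hcase', hwp] at h2
        rw [e1, hcase', Nat.mod_self]
        exact h2
      · rw [e1, Nat.mod_eq_of_lt hcase]
        exact hwstep _ hr
    obtain ⟨y, B, hB, hyB⟩ := hD x' hx'
    obtain ⟨k, hk⟩ := hB (p + n + 1)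
    set k' := (k / p + 1) * p with hk'def
    have hkk' : k < k' := (Nat.div_lt_iff_lt_mul hp0).mp (Nat.lt_succ_self _)
    have hk'k : k' ≤ k + p := by
      have h1 : k / p * p ≤ k := Nat.div_mul_le_self k p
      have : k' = k / p * p + p := by rw [hk'def]; ring
      omega
    refine ⟨f^[k'] y, fun i hi => ?_⟩
    have hiB : k' + i ∈ B := by
      have heq : k' + i = k + (k' - k + i) := by omega
      rw [heq]
      exact hk _ (by omega)
    have htr := hyB (k' + i) hiB
    have hmod : (k' + i) % p = i := by
      rw [hk'def, Nat.add_comm, Nat.mul_comm, Nat.add_mul_mod_self_left]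
      exact Nat.mod_eq_of_lt (by omega)
    have hx'val : x' (k' + i) = x i := by
      rw [hx'def]
      simp only
      rw [hmod]
      exact hw i hi
    rw [← Function.iterate_add_apply, Nat.add_comm i k', ← hx'val]
    exact htr
  -- compactness: pass to a full tracing point
  set K : ℕ → Set X := fun n => {z | ∀ i ≤ n, (f^[i] z, x i) ∈ E₂} with hK
  have hKc : ∀ n, IsClosed (K n) := by
    intro n
    have : K n = ⋂ i, ⋂ (_ : i ≤ n), (fun z => (f^[i] z, x i)) ⁻¹' E₂ := by
      ext z; simp [hK]
    rw [this]
    exact isClosed_iInter fun i => isClosed_iInter fun _ =>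
      hE₂c.preimage ((hf.iterate i).prodMk continuous_const)
  have hKne : ∀ n, (K n).Nonempty := fun n => key n
  have hKdec : ∀ n, K (n + 1) ⊆ K n := fun n z hz i hi => hz i (by omega)
  obtain ⟨z, hz⟩ := IsCompact.nonempty_iInter_of_sequence_nonempty_isCompact_isClosed
    K hKdec hKne (hKc 0).isCompact hKc
  refine ⟨z, fun i _ => hE₂E ?_⟩
  exact (Set.mem_iInter.mp hz i) i le_rfl
end

section
/- Let (X, f) be a dynamical system, where X is a compact uniform space and f : X → X is a continuous surjection. For every entourage E there exists an entourage D such that: if x_0, x_1, …, x_n is a D-chain from x_0 to x_0 (i.e., x_n = x_0), then там exists an E-chain y_0, y_1, …, y_n from y_0 to y_0 (i.e., y_n = y_0) with all y_i ∈ CR(f) and (x_i, y_i) ∈ E for all 0 ≤ i ≤ n. -/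
open Filter Set Function

section Aux

variable {X : Type*} [UniformSpace X]

/-- Three-fold composition entourage. -/
lemma comp3_aux {E : Set (X × X)} (hE : E ∈ uniformity X) :
    ∃ W ∈ uniformity X, SetRel.IsSymm W ∧ W ⊆ E ∧
      ∀ a b c d : X, (a, b) ∈ W → (b, c) ∈ W → (c, d) ∈ W → (a, d) ∈ E := by
  obtain ⟨V, hV, hVE⟩ := comp_mem_uniformity_sets hE
  obtain ⟨W, hW, hWs, hWV⟩ := comp_symm_mem_uniformity_sets hV
  have hWsubV : ∀ a b : X, (a, b) ∈ W → (a, b) ∈ V := fun a b hab =>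
    hWV (SetRel.prodMk_mem_comp (refl_mem_uniformity hW) hab)
  refine ⟨W, hW, hWs, ?_, ?_⟩
  · intro p hp
    exact hVE (SetRel.prodMk_mem_comp (hWsubV _ _ hp) (hWsubV _ _ (refl_mem_uniformity hW)))
  · intro a b c d hab hbc hcd
    exact hVE (SetRel.prodMk_mem_comp (hWV (SetRel.prodMk_mem_comp hab hbc)) (hWsubV _ _ hcd))

/-- Chains are monotone in the entourage. -/
lemma dChain_mono {f : X → X} {D D' : Set (X × X)} (h : D ⊆ D') {x y : X}
    (hc : DChain f D x y) : DChain f D' x y := by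
  obtain ⟨n, hn, c, h0, hn', hs⟩ := hc
  exact ⟨n, hn, c, h0, hn', fun i hi => h (hs i hi)⟩

/-- Rotation: every point of a closed `D`-chain lies on a closed `D`-chain. -/
lemma rot_chain {f : X → X} {D : Set (X × X)} {n : ℕ} (hn : 1 ≤ n)
    {c : ℕ → X} (hc : c n = c 0) (hs : ∀ i < n, (f (c i), c (i + 1)) ∈ D)
    {i : ℕ} (hi : i ≤ n) : DChain f D (c i) (c i) := by
  refine ⟨n, hn, fun j => c (if i + j ≤ n then i + j else i + j - n), ?_, ?_, ?_⟩
  · simp [hi]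
  · by_cases h0 : i = 0
    · subst h0
      simp [hc]
    · have h1 : ¬ (i + n ≤ n) := by omega
      have h2 : i + n - n = i := by omega
      simp [h1, h2]
  · intro j hj
    simp only [← Nat.add_assoc]
    by_cases h1 : i + j + 1 ≤ n
    · have h2 : i + j ≤ n := by omega
      simp only [if_pos h2, if_pos h1]
      exact hs (i + j) (by omega)
    · by_cases h2 : i + j ≤ n
      · have he : i + j = n := by omega
        have h4 : i + j + 1 - n = 1 := by omega
        simp only [if_pos h2, if_neg h1, h4]
        rw [he, hc]
        exact hs 0 (by omega)
      · have h3 : i + j - n < n := by omega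
        have h4 : i + j + 1 - n = (i + j - n) + 1 := by omega
        simp only [if_neg h2, if_neg h1, h4]
        exact hs _ h3

/-- Transfer a closed chain at `z` to a closed chain at a nearby point `x`. -/
lemma chain_transfer {f : X → X} {D0 W D : Set (X × X)} {x z : X}
    (hD0W : D0 ⊆ W) (hrefl : ∀ a : X, (a, a) ∈ W)
    (hfxz : (f x, f z) ∈ W) (hzx : (z, x) ∈ W)
    (h3 : ∀ a b c d : X, (a, b) ∈ W → (b, c) ∈ W → (c, d) ∈ W → (a, d) ∈ D)
    (h : DChain f D0 z z) : DChain f D x x := by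
  classical
  obtain ⟨n, hn, c, h0, hcn, hs⟩ := h
  refine ⟨n, hn, fun j => if j = 0 ∨ j = n then x else c j, by simp, by simp, ?_⟩
  intro i hi
  have hin : i ≠ n := by omega
  have hfirst : (f (if i = 0 ∨ i = n then x else c i), f (c i)) ∈ W := by
    by_cases h1 : i = 0
    · subst h1
      simp only [if_pos (Or.inl rfl), h0]
      exact hfxz
    · rw [if_neg (by simp [h1, hin])]
      exact hrefl _
  have hmid : (f (c i), c (i + 1)) ∈ W := hD0W (hs i hi)
  have hlast : (c (i + 1), if i + 1 = 0 ∨ i + 1 = n then x else c (i + 1)) ∈ W := by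
    by_cases h1 : i + 1 = n
    · rw [if_pos (Or.inr h1), h1, hcn]
      exact hzx
    · rw [if_neg (by simp [h1])]
      exact hrefl _
  exact h3 _ _ _ _ hfirst hmid hlast

/-- Points on closed `D`-chains for small `D` are `E`-close to `CR f`. -/
lemma approx_CR [CompactSpace X] (f : X → X) (hf : Continuous f) :
    ∀ E ∈ uniformity X, ∃ D ∈ uniformity X,
      ∀ x : X, DChain f D x x → ∃ y ∈ CR f, (x, y) ∈ E := by
  classical
  intro E hE
  have huc : UniformContinuous f := CompactSpace.uniformContinuous_of_continuous hf
  -- the open target set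
  obtain ⟨V, ⟨hV, hVopen⟩, hVE⟩ := (uniformity_hasBasis_open (α := X)).mem_iff.1 hE
  set U : Set X := ⋃ y ∈ CR f, {x : X | (x, y) ∈ V} with hUdef
  have hUopen : IsOpen U := by
    refine isOpen_biUnion fun y _ => ?_
    exact hVopen.preimage (Continuous.prodMk continuous_id continuous_const)
  -- the directed family of closed sets
  set F : {D : Set (X × X) // D ∈ uniformity X} → Set X :=
    fun D => closure {x : X | DChain f D.1 x x} with hFdef
  have hInter : (⋂ D, F D) ⊆ U := by
    intro x hx
    have hxCR : x ∈ CR f := by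
      intro D hD
      obtain ⟨W, hW, hWs, hWD, h3⟩ := comp3_aux hD
      have hWf : (fun p : X × X => (f p.1, f p.2)) ⁻¹' W ∈ uniformity X :=
        mem_map.1 (huc hW)
      set D0 : Set (X × X) :=
        SetRel.symmetrize (W ∩ (fun p : X × X => (f p.1, f p.2)) ⁻¹' W) with hD0def
      have hD0 : D0 ∈ uniformity X := symmetrize_mem_uniformity (inter_mem hW hWf)
      have hxF : x ∈ F ⟨D0, hD0⟩ := Set.mem_iInter.1 hx ⟨D0, hD0⟩
      obtain ⟨z, hzball, hzchain⟩ :=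
        (UniformSpace.mem_closure_iff_ball.1 hxF hD0)
      have hxz : (x, z) ∈ D0 := hzball
      have hzx : (z, x) ∈ D0 := (SetRel.comm (R := SetRel.symmetrize (W ∩ (fun p : X × X => (f p.1, f p.2)) ⁻¹' W))).1 hxz
      have hD0W : D0 ⊆ W := SetRel.symmetrize_subset_self.trans inter_subset_left
      have hfxz : (f x, f z) ∈ W := by
        have hpre : (x, z) ∈ W ∩ (fun p : X × X => (f p.1, f p.2)) ⁻¹' W :=
          SetRel.symmetrize_subset_self hxz
        exact hpre.2
      exact chain_transfer hD0W (fun a => refl_mem_uniformity hW) hfxz (hD0W hzx)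
        h3 hzchain
    exact Set.mem_biUnion hxCR (refl_mem_uniformity hV)
  -- compactness
  have hcompl : IsCompact Uᶜ := hUopen.isClosed_compl.isCompact
  have hempty : Uᶜ ∩ ⋂ D, F D = ∅ := by
    rw [Set.eq_empty_iff_forall_notMem]
    rintro x ⟨hxU, hxF⟩
    exact hxU (hInter hxF)
  obtain ⟨u, hu⟩ := hcompl.elim_finite_subfamily_closed F (fun D => isClosed_closure) hempty
  set Dstar : Set (X × X) := ⋂ D ∈ u, D.1 ∩ E with hDstardef
  have hDstar : Dstar ∈ uniformity X := by
    refine (Filter.biInter_finset_mem u).2 fun D _ => inter_mem D.2 hE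
  refine ⟨Dstar, hDstar, ?_⟩
  intro x hx
  have hxU : x ∈ U := by
    by_contra hxU
    have hxmem : x ∈ Uᶜ ∩ ⋂ D ∈ u, F D := by
      refine ⟨hxU, Set.mem_iInter₂.2 fun D hD => ?_⟩
      refine subset_closure ?_
      exact dChain_mono (fun p hp => (Set.mem_iInter₂.1 hp D hD).1) hx
    rw [hu] at hxmem
    exact hxmem
  obtain ⟨y, hyCR, hxy⟩ := Set.mem_iUnion₂.1 hxU
  exact ⟨y, hyCR, hVE hxy⟩

end Aux

/-- closed D-chains are E-approximated by closed E-chains in CR(f). -/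
theorem closed_chain_approx_in_CR
    {X : Type*} [UniformSpace X] [CompactSpace X]
    (f : X → X) (hf : Continuous f) (hsurj : Function.Surjective f) :
    ∀ E ∈ uniformity X, ∃ D ∈ uniformity X,
      ∀ n : ℕ, 1 ≤ n → ∀ c : ℕ → X, c n = c 0 →
        (∀ i < n, (f (c i), c (i + 1)) ∈ D) →
        ∃ y : ℕ → X, y n = y 0 ∧ (∀ i ≤ n, y i ∈ CR f) ∧
          (∀ i < n, (f (y i), y (i + 1)) ∈ E) ∧
          ∀ i ≤ n, (c i, y i) ∈ E := by
  classical
  intro E hE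
  obtain ⟨W₁, hW₁, hW₁s, hW₁E, h3⟩ := comp3_aux hE
  have huc : UniformContinuous f := CompactSpace.uniformContinuous_of_continuous hf
  have hWf : (fun p : X × X => (f p.1, f p.2)) ⁻¹' W₁ ∈ uniformity X :=
    mem_map.1 (huc hW₁)
  set W₂ : Set (X × X) :=
    SetRel.symmetrize (W₁ ∩ (fun p : X × X => (f p.1, f p.2)) ⁻¹' W₁) with hW₂def
  have hW₂ : W₂ ∈ uniformity X := symmetrize_mem_uniformity (inter_mem hW₁ hWf)
  have hW₂W₁ : W₂ ⊆ W₁ := SetRel.symmetrize_subset_self.trans inter_subset_left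
  have hW₂f : ∀ a b : X, (a, b) ∈ W₂ → (f a, f b) ∈ W₁ := by
    intro a b h
    have hpre : (a, b) ∈ W₁ ∩ (fun p : X × X => (f p.1, f p.2)) ⁻¹' W₁ :=
      SetRel.symmetrize_subset_self h
    exact hpre.2
  obtain ⟨D₁, hD₁, hD₁prop⟩ := approx_CR f hf W₂ hW₂
  refine ⟨D₁ ∩ W₁, inter_mem hD₁ hW₁, ?_⟩
  intro n hn c hcn hstep
  have hstepD : ∀ i < n, (f (c i), c (i + 1)) ∈ D₁ := fun i hi => (hstep i hi).1
  have hchain : ∀ x : X, DChain f D₁ x x → ∃ y ∈ CR f, (x, y) ∈ W₂ := hD₁prop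
  set g : X → X := fun x => if hx : ∃ y ∈ CR f, (x, y) ∈ W₂ then hx.choose else x
    with hgdef
  have hgp : ∀ i ≤ n, g (c i) ∈ CR f ∧ (c i, g (c i)) ∈ W₂ := by
    intro i hi
    have hx : ∃ y ∈ CR f, (c i, y) ∈ W₂ :=
      hchain (c i) (rot_chain hn hcn hstepD hi)
    have : g (c i) = hx.choose := by simp [hgdef, dif_pos hx]
    rw [this]
    exact ⟨hx.choose_spec.1, hx.choose_spec.2⟩
  refine ⟨fun i => g (c i), congrArg g hcn, fun i hi => (hgp i hi).1, ?_,
    fun i hi => hW₁E (hW₂W₁ ((hgp i hi).2))⟩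
  intro i hi
  have h1 : (f (g (c i)), f (c i)) ∈ W₁ :=
    hW₂f _ _ ((SetRel.comm (R := SetRel.symmetrize (W₁ ∩ (fun p : X × X => (f p.1, f p.2)) ⁻¹' W₁))).1 (hgp i (le_of_lt hi)).2)
  have h2 : (f (c i), c (i + 1)) ∈ W₁ := (hstep i hi).2
  have h3' : (c (i + 1), g (c (i + 1))) ∈ W₁ := hW₂W₁ (hgp (i + 1) hi).2
  exact h3 _ _ _ _ h1 h2 h3'
end

section
/- Let (X, f) be a dynamical system, where X is a compact uniform space and f : X → X is a continuous surjection. For every entourage E there is an entourage D such that for every thick set T ⊆ ℕ and every sequence (x_i)_{i∈ℕ} which is a D-pseudo orbit on T, there exist a thick set T' ⊆ T and a sequence (y_i)_{i∈ℕ} with all y_i ∈ CR(f) which is an E-pseudo orbit on T' and satisfies (x_i, y_i) ∈ E for every i ∈ T'. -/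
open Filter Set Function

section AuxLemmas

variable {X : Type*} [UniformSpace X] {f : X → X}

lemma pad_left' {G₁ H : Set (X × X)} (hG₁ : G₁ ∈ uniformity X)
    (htr : SetRel.comp G₁ (SetRel.comp G₁ G₁) ⊆ H) : G₁ ⊆ H := fun q hq =>
  htr ⟨q.1, refl_mem_uniformity hG₁, q.2, hq, refl_mem_uniformity hG₁⟩

lemma triple_exists' {H : Set (X × X)} (hH : H ∈ uniformity X) :
    ∃ G₁ ∈ uniformity X, SetRel.IsSymm G₁ ∧ SetRel.comp G₁ (SetRel.comp G₁ G₁) ⊆ H := by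
  obtain ⟨t, ht, htsymm, htH⟩ := comp_symm_mem_uniformity_sets hH
  obtain ⟨t₁, ht₁, ht₁symm, ht₁t⟩ := comp_symm_mem_uniformity_sets ht
  refine ⟨t₁, ht₁, ht₁symm, ?_⟩
  rintro ⟨a, b⟩ ⟨u, hau, v, huv, hvb⟩
  exact htH ⟨u, ht₁t ⟨a, refl_mem_uniformity ht₁, hau⟩, ht₁t ⟨v, huv, hvb⟩⟩

lemma dchain_mono' {A B : Set (X × X)} (h : A ⊆ B) {x y : X} :
    DChain f A x y → DChain f B x y :=
  fun ⟨n, hn, c, h0, hcn, hs⟩ => ⟨n, hn, c, h0, hcn, fun i hi => h (hs i hi)⟩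

lemma dchain_perturb {H G₁ V A : Set (X × X)}
    (hG₁ : G₁ ∈ uniformity X) (htr : SetRel.comp G₁ (SetRel.comp G₁ G₁) ⊆ H)
    (hVG₁ : V ⊆ G₁) (hAG₁ : A ⊆ G₁)
    (huc : ∀ a b : X, (a, b) ∈ V → (f a, f b) ∈ G₁)
    {z p : X} (hz : DChain f A z z) (hzp : (z, p) ∈ V) (hpz : (p, z) ∈ V) :
    DChain f H p p := by
  obtain ⟨n, hn, c, hc0, hcn, hstep⟩ := hz
  refine ⟨n, hn, fun i => if i = 0 ∨ n ≤ i then p else c i, by simp, by simp, ?_⟩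
  intro i hi
  have hfpz : (f p, f z) ∈ G₁ := huc p z hpz
  by_cases h0 : i = 0
  · subst h0
    by_cases h1 : n = 1
    · have e1 : (0 + 1 = 0 ∨ n ≤ 0 + 1) := Or.inr (by omega)
      simp only [if_pos (Or.inl rfl), if_pos e1]
      have hs := hstep 0 hi
      rw [hc0] at hs
      have hc1 : c (0 + 1) = z := by rw [show (0 + 1 : ℕ) = n from by omega, hcn]
      rw [hc1] at hs
      exact htr ⟨f z, hfpz, z, hAG₁ hs, hVG₁ hzp⟩
    · have h2 : ¬ (0 + 1 = 0 ∨ n ≤ 0 + 1) := by omega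
      simp only [if_pos (Or.inl rfl), if_neg h2]
      have hs := hstep 0 hi
      rw [hc0] at hs
      exact htr ⟨f z, hfpz, c (0 + 1), hAG₁ hs, refl_mem_uniformity hG₁⟩
  · by_cases h1 : i + 1 = n
    · have hA1 : ¬ (i = 0 ∨ n ≤ i) := by omega
      have e1 : (i + 1 = 0 ∨ n ≤ i + 1) := Or.inr (by omega)
      simp only [if_neg hA1, if_pos e1]
      have hs := hstep i hi
      have hcz : c (i + 1) = z := by rw [h1, hcn]
      rw [hcz] at hs
      exact htr ⟨f (c i), refl_mem_uniformity hG₁, z, hAG₁ hs, hVG₁ hzp⟩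
    · have hA1 : ¬ (i = 0 ∨ n ≤ i) := by omega
      have hA2 : ¬ (i + 1 = 0 ∨ n ≤ i + 1) := by omega
      simp only [if_neg hA1, if_neg hA2]
      exact pad_left' hG₁ htr (hAG₁ (hstep i hi))

lemma exists_uc_symm [CompactSpace X] (hf : Continuous f)
    {H : Set (X × X)} (hH : H ∈ uniformity X) :
    ∃ V ∈ uniformity X, SetRel.IsSymm V ∧ V ⊆ H ∧ ∀ a b : X, (a, b) ∈ V → (f a, f b) ∈ H := by
  have huc := CompactSpace.uniformContinuous_of_continuous hf
  have hpre : {q : X × X | (f q.1, f q.2) ∈ H} ∈ uniformity X :=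
    (uniformContinuous_def.mp huc) H hH
  exact ⟨SetRel.symmetrize (H ∩ {q : X × X | (f q.1, f q.2) ∈ H}),
    symmetrize_mem_uniformity (Filter.inter_mem hH hpre),
    inferInstance, fun q hq => (SetRel.symmetrize_subset_self hq).1,
    fun a b h => (SetRel.symmetrize_subset_self h).2⟩

lemma mem_CR_of_forall_closure [CompactSpace X] (hf : Continuous f) {p : X}
    (hp : ∀ V ∈ uniformity X, p ∈ closure {x | DChain f V x x}) : p ∈ CR f := by
  intro H hH
  obtain ⟨G₁, hG₁, hG₁symm, htr⟩ := triple_exists' hH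
  obtain ⟨V, hV, hVsymm, hVG₁, hucV⟩ := exists_uc_symm hf hG₁
  obtain ⟨q, hq1, hq2⟩ :=
    mem_closure_iff_nhds.mp (hp V hV) _ (UniformSpace.ball_mem_nhds p hV)
  have hpq : (p, q) ∈ V := hq1
  exact dchain_perturb hG₁ htr hVG₁ hVG₁ hucV hq2 ((Std.Symm.symm (self := hVsymm) _ _) hpq) hpq

lemma exists_CR_approx [CompactSpace X] (hf : Continuous f)
    {W : Set (X × X)} (hW : W ∈ uniformity X) (hWsymm : SetRel.IsSymm W) :
    ∃ G ∈ uniformity X, ∀ x : X, DChain f G x x → ∃ z ∈ CR f, (x, z) ∈ W := by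
  obtain ⟨W₀, ⟨hW₀u, hW₀open, hW₀symm⟩, hW₀W⟩ :=
    uniformity_hasBasis_open_symmetric.mem_iff.mp hW
  set U : Set X := ⋃ z ∈ CR f, UniformSpace.ball z W₀ with hUdef
  have hUopen : IsOpen U := isOpen_biUnion fun z _ => UniformSpace.isOpen_ball z hW₀open
  set t : {V : Set (X × X) // V ∈ uniformity X} → Set X :=
    fun i => closure {x | DChain f i.1 x x} ∩ Uᶜ with htdef
  have htclosed : ∀ i, IsClosed (t i) := fun i => isClosed_closure.inter hUopen.isClosed_compl
  have hinter : (Set.univ ∩ ⋂ i, t i) = ∅ := by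
    rw [Set.univ_inter]
    ext p
    simp only [Set.mem_iInter, Set.mem_empty_iff_false, iff_false]
    intro hp
    have hpCR : p ∈ CR f := mem_CR_of_forall_closure hf (fun V hV => (hp ⟨V, hV⟩).1)
    have hpU : p ∈ U := Set.mem_biUnion hpCR (refl_mem_uniformity hW₀u)
    exact (hp ⟨Set.univ, Filter.univ_mem⟩).2 hpU
  obtain ⟨u, hu⟩ := isCompact_univ.elim_finite_subfamily_closed t htclosed hinter
  refine ⟨⋂ i ∈ u, i.1, (Filter.biInter_finset_mem u).mpr (fun i _ => i.2), ?_⟩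
  intro x hx
  by_contra hno
  push_neg at hno
  have hxU : x ∉ U := by
    intro hxU
    obtain ⟨z, hz, hball⟩ := Set.mem_iUnion₂.mp hxU
    have hzx : (z, x) ∈ W₀ := hball
    exact hno z hz ((Std.Symm.symm (self := hWsymm) _ _) (hW₀W hzx))
  have hmem : x ∈ Set.univ ∩ ⋂ i ∈ u, t i := by
    refine ⟨trivial, Set.mem_iInter₂.mpr fun i hi => ⟨subset_closure ?_, hxU⟩⟩
    exact dchain_mono' (Set.biInter_subset_of_mem hi) hx
  rw [hu] at hmem
  exact hmem

lemma dchain_of_cycle {D G : Set (X × X)} (hDG : D ⊆ G)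
    {x : ℕ → X} {T : Set ℕ} (hx : PseudoOrbitOn f D x T) {j j' : ℕ} (hjj' : j < j')
    (hT : ∀ q, j ≤ q → q < j' → q ∈ T) (hclose : (f (x (j' - 1)), x j) ∈ G)
    {p : ℕ} (hp1 : j ≤ p) (hp2 : p < j') : DChain f G (x p) (x p) := by
  set n := j' - j with hn
  refine ⟨n, by omega, fun i => x (if p + i < j' then p + i else p + i - n), ?_, ?_, ?_⟩
  · simp only [if_pos (show p + 0 < j' by omega)]
    congr 1
  · have hnot : ¬ p + n < j' := by omega
    simp only [if_neg hnot]
    congr 1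
    omega
  · intro i hi
    by_cases h1 : p + i + 1 < j'
    · have h2 : p + i < j' := by omega
      have h3 : p + (i + 1) < j' := by omega
      simp only [if_pos h2, if_pos h3]
      have h4 : p + (i + 1) = (p + i) + 1 := by omega
      rw [h4]
      exact hDG (hx (p + i) (hT _ (by omega) (by omega)))
    · by_cases h2 : p + i < j'
      · have h3 : ¬ p + (i + 1) < j' := by omega
        simp only [if_pos h2, if_neg h3]
        have h4 : p + i = j' - 1 := by omega
        have h5 : p + (i + 1) - n = j := by omega
        rw [h4, h5]
        exact hclose
      · have h3 : ¬ p + (i + 1) < j' := by omega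
        simp only [if_neg h2, if_neg h3]
        have h4 : p + (i + 1) - n = (p + i - n) + 1 := by omega
        rw [h4]
        exact hDG (hx (p + i - n) (hT _ (by omega) (by omega)))

end AuxLemmas

/-- D-pseudo orbits on thick sets are E-approximated on thick subsets by
E-pseudo orbits contained in CR(f). -/
theorem pseudoOrbit_on_thick_approx_in_CR
    {X : Type*} [UniformSpace X] [CompactSpace X]
    (f : X → X) (hf : Continuous f) (hsurj : Function.Surjective f) :
    ∀ E ∈ uniformity X, ∃ D ∈ uniformity X,
      ∀ T : Set ℕ, Thick T → ∀ x : ℕ → X, PseudoOrbitOn f D x T →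
        ∃ T' : Set ℕ, T' ⊆ T ∧ Thick T' ∧
          ∃ y : ℕ → X, (∀ i : ℕ, y i ∈ CR f) ∧ PseudoOrbitOn f E y T' ∧
            ∀ i ∈ T', (x i, y i) ∈ E := by
  classical
  intro E hE
  obtain ⟨E₁, hE₁u, hE₁symm, hE₁tr⟩ := triple_exists' hE
  have hE₁E : E₁ ⊆ E := pad_left' hE₁u hE₁tr
  obtain ⟨W, hWu, hWsymm, hWE₁, hWuc⟩ := exists_uc_symm hf hE₁u
  obtain ⟨G, hGu, hGapprox⟩ := exists_CR_approx hf hWu hWsymm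
  obtain ⟨V, hVu, hVsymm, hVtr⟩ := triple_exists' hGu
  have hVG : V ⊆ G := pad_left' hVu hVtr
  refine ⟨V ∩ E₁, Filter.inter_mem hVu hE₁u, ?_⟩
  intro T hT x hx
  set P : ℕ → Prop := fun i => ∃ z ∈ CR f, (x i, z) ∈ W with hPdef
  set T' : Set ℕ := {i | i ∈ T ∧ P i ∧ P (i + 1)} with hT'def
  have key : ∀ n : ℕ, 1 ≤ n → ∃ k : ℕ, ∀ i < n, (k + i) ∈ T' := by
    intro n hn1
    obtain ⟨s, hsfin, hscover⟩ := isCompact_univ.totallyBounded V hVu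
    set N := hsfin.toFinset.card with hNdef
    set L := n + 1 with hLdef
    obtain ⟨k, hk⟩ := hT (N * L)
    have hc : ∀ a : Fin (N + 1), ∃ cz ∈ hsfin.toFinset, (x (k + a.1 * L), cz) ∈ V := by
      intro a
      have hmem := hscover (Set.mem_univ (x (k + a.1 * L)))
      obtain ⟨cz, hcz, hmem⟩ := Set.mem_iUnion₂.mp hmem
      exact ⟨cz, hsfin.mem_toFinset.mpr hcz, hmem⟩
    choose cz hcz1 hcz2 using hc
    have hcard : Fintype.card {y // y ∈ hsfin.toFinset} < Fintype.card (Fin (N + 1)) := by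
      simp [Fintype.card_coe, hNdef]
    obtain ⟨a, b, hab, heq⟩ := Fintype.exists_ne_map_eq_of_card_lt
      (fun a : Fin (N + 1) => (⟨cz a, hcz1 a⟩ : {y // y ∈ hsfin.toFinset})) hcard
    have hczeq : cz a = cz b := congrArg Subtype.val heq
    have habv : a.1 ≠ b.1 := fun hv => hab (Fin.ext hv)
    have hmain : ∃ av bv : ℕ, av < bv ∧ bv ≤ N ∧
        (x (k + bv * L), x (k + av * L)) ∈ SetRel.comp V V := by
      rcases Nat.lt_or_ge a.1 b.1 with h | h
      · exact ⟨a.1, b.1, h, by omega, ⟨cz b, hcz2 b,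
          by rw [← hczeq]; exact (Std.Symm.symm (self := hVsymm) _ _) (hcz2 a)⟩⟩
      · have h' : b.1 < a.1 := by omega
        exact ⟨b.1, a.1, h', by omega, ⟨cz a, hcz2 a,
          by rw [hczeq]; exact (Std.Symm.symm (self := hVsymm) _ _) (hcz2 b)⟩⟩
    obtain ⟨av, bv, hav, hbN, hcomp⟩ := hmain
    have hmul1 : av * L + L ≤ bv * L := by
      have := Nat.mul_le_mul_right L (Nat.succ_le_of_lt hav)
      rwa [Nat.succ_mul] at this
    have hmul2 : bv * L ≤ N * L := Nat.mul_le_mul_right L hbN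
    set j := k + av * L with hjdef
    set j' := k + bv * L with hj'def
    have hjj' : j < j' := by omega
    have hTrun : ∀ q, j ≤ q → q < j' → q ∈ T := by
      intro q hq1 hq2
      have hq3 : q - k < N * L := by omega
      have := hk (q - k) hq3
      rwa [show k + (q - k) = q by omega] at this
    have hclose : (f (x (j' - 1)), x j) ∈ G := by
      have hstep : (f (x (j' - 1)), x j') ∈ V ∩ E₁ := by
        have h1 : j' - 1 ∈ T := hTrun (j' - 1) (by omega) (by omega)
        have := hx (j' - 1) h1
        rwa [show j' - 1 + 1 = j' by omega] at this
      exact hVtr ⟨x j', hstep.1, hcomp⟩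
    have hCR : ∀ p, j ≤ p → p < j' → P p := by
      intro p hp1 hp2
      exact hGapprox (x p)
        (dchain_of_cycle (fun q hq => hVG hq.1) hx hjj' hTrun hclose hp1 hp2)
    refine ⟨j, ?_⟩
    intro i hi
    refine ⟨hTrun (j + i) (by omega) (by omega), hCR (j + i) (by omega) (by omega), ?_⟩
    have : j + i + 1 < j' := by omega
    exact hCR (j + i + 1) (by omega) this
  have hthick' : Thick T' := by
    intro m
    rcases Nat.eq_zero_or_pos m with hm | hm
    · exact ⟨0, fun i hi => absurd hi (by omega)⟩
    · exact key m hm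
  have hz₀ : ∃ z, z ∈ CR f := by
    obtain ⟨k, hk⟩ := key 1 le_rfl
    obtain ⟨_, ⟨z, hz, _⟩, _⟩ := hk 0 (by omega)
    exact ⟨z, hz⟩
  obtain ⟨z₀, hz₀⟩ := hz₀
  set y : ℕ → X := fun i => if h : P i then h.choose else z₀ with hydef
  have hyCR : ∀ i, y i ∈ CR f := by
    intro i
    rw [hydef]
    by_cases h : P i
    · simp only [dif_pos h]
      exact h.choose_spec.1
    · simp only [dif_neg h]
      exact hz₀
  have hyW : ∀ i, P i → (x i, y i) ∈ W := by
    intro i h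
    rw [hydef]
    simp only [dif_pos h]
    exact h.choose_spec.2
  refine ⟨T', fun i hi => hi.1, hthick', y, hyCR, ?_, ?_⟩
  · intro i hi
    obtain ⟨hiT, hPi, hPi1⟩ := hi
    have h1 : (x i, y i) ∈ W := hyW i hPi
    have h2 : (x (i + 1), y (i + 1)) ∈ W := hyW (i + 1) hPi1
    have h3 : (f (y i), f (x i)) ∈ E₁ := hWuc _ _ ((Std.Symm.symm (self := hWsymm) _ _) h1)
    have h4 : (f (x i), x (i + 1)) ∈ E₁ := (hx i hiT).2
    exact hE₁tr ⟨f (x i), h3, x (i + 1), h4, hWE₁ h2⟩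
  · intro i hi
    exact hE₁E (hWE₁ (hyW i hi.2.1))
end

section
/- Let (X, f) be a dynamical system, where X is a compact uniform space and f : X → X is a continuous surjection. For every entourage E there is an entourage D such that for every D-pseudo orbit (x_i)_{i∈ℕ} of f there exist an E-pseudo orbit (y_i)_{i∈ℕ} with all y_i ∈ CR(f) and an integer N > 0 such that (x_i, y_i) ∈ E for every i ≥ N. -/
open Filter Set Function
open scoped Uniformity SetRel

section Aux

variable {X : Type*} [UniformSpace X]

lemma dchain_mono {f : X → X} {D D' : Set (X × X)} (h : D ⊆ D') {a b : X}
    (hc : DChain f D a b) : DChain f D' a b := by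
  obtain ⟨n, hn, c, h0, h1, h2⟩ := hc
  exact ⟨n, hn, c, h0, h1, fun i hi => h (h2 i hi)⟩

lemma pseudo_dchain {f : X → X} {D : Set (X × X)} {x : ℕ → X}
    (hx : PseudoOrbitOn f D x Set.univ) {i j : ℕ} (hij : i < j) :
    DChain f D (x i) (x j) := by
  have hn : i + (j - i) = j := by omega
  have h1 : 1 ≤ j - i := by omega
  refine ⟨j - i, h1, fun k => x (i + k), by simp, by simp only []; rw [hn], ?_⟩
  intro k hk
  have := hx (i + k) (Set.mem_univ _)
  simpa [Nat.add_assoc] using this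

lemma dchain_replace_ends {f : X → X} {D' W W₂ : Set (X × X)}
    (hW2 : ∀ a b : X, (a, b) ∈ W → (f a, f b) ∈ W₂)
    (hreflW : ∀ a : X, (a, a) ∈ W) (hreflW2 : ∀ a : X, (a, a) ∈ W₂)
    {a b z : X} (hza : (z, a) ∈ W) (hbz : (b, z) ∈ W)
    (h : DChain f D' a b) : DChain f (W₂ ○ (D' ○ W)) z z := by
  obtain ⟨n, hn, c, h0, h1, h2⟩ := h
  refine ⟨n, hn, fun k => if k = 0 ∨ k = n then z else c k, by simp, by simp, ?_⟩
  intro i hi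
  have hin : ¬ (i = n) := by omega
  refine SetRel.mem_comp.2 ⟨f (c i), ?_, SetRel.mem_comp.2 ⟨c (i + 1), h2 i hi, ?_⟩⟩
  · by_cases hi0 : i = 0
    · subst hi0
      simp only [true_or, if_pos]
      exact hW2 _ _ (by rwa [h0])
    · simp only [hi0, hin, or_self, if_neg, not_false_iff]
      exact hreflW2 _
  · by_cases hi1 : i + 1 = n
    · simp only [hi1, or_true, if_pos]
      rw [← h1] at hbz; exact hbz
    · have : ¬ (i + 1 = 0 ∨ i + 1 = n) := by omega
      simp only [this, if_neg, not_false_iff]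
      exact hreflW _

lemma dchain_penultimate {f : X → X} {D : Set (X × X)} {z : X} (h : DChain f D z z) :
    ∃ p : X, DChain f D p p ∧ (f p, z) ∈ D := by
  obtain ⟨n, hn, c, h0, h1, h2⟩ := h
  have hlast : (f (c (n - 1)), z) ∈ D := by
    have := h2 (n - 1) (by omega)
    rwa [show n - 1 + 1 = n by omega, h1] at this
  refine ⟨c (n - 1), ⟨n, hn, fun k => if k = 0 then c (n - 1) else c (k - 1), by simp,
    by simp [show ¬ (n = 0) by omega], ?_⟩, hlast⟩
  intro i hi
  by_cases hi0 : i = 0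
  · subst hi0
    simp only [if_pos rfl, if_neg (by omega : ¬ (0 + 1 = 0))]
    rw [show (0 : ℕ) + 1 - 1 = 0 from rfl, h0]
    exact hlast
  · simp only [if_neg hi0, if_neg (by omega : ¬ (i + 1 = 0))]
    rw [show i + 1 - 1 = (i - 1) + 1 by omega]
    exact h2 (i - 1) (by omega)

end Aux

section Compactness

variable {X : Type*} [UniformSpace X] [CompactSpace X]

lemma lemmaC {f : X → X} (hf : Continuous f) :
    ∀ V ∈ uniformity X, ∃ D₀ ∈ uniformity X,
      ∀ z : X, DChain f D₀ z z → ∃ w ∈ CR f, (w, z) ∈ V := by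
  intro V hV
  have ufc : UniformContinuous f := CompactSpace.uniformContinuous_of_continuous hf
  obtain ⟨V', ⟨hV'mem, hV'open⟩, hV'sub⟩ := uniformity_hasBasis_open.mem_iff.1 hV
  set U : Set X := {z | ∃ w ∈ CR f, (w, z) ∈ V'} with hU
  have hUopen : IsOpen U := by
    have : U = ⋃ w ∈ CR f, UniformSpace.ball w V' := by
      ext z
      simp [hU, UniformSpace.ball, Set.mem_iUnion]
    rw [this]
    exact isOpen_biUnion fun w _ => UniformSpace.isOpen_ball w hV'open
  suffices h : ∃ D₀ ∈ uniformity X, ∀ z : X, DChain f D₀ z z → z ∈ U by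
    obtain ⟨D₀, hD₀, h⟩ := h
    refine ⟨D₀, hD₀, fun z hz => ?_⟩
    obtain ⟨w, hw, hwz⟩ := h z hz
    exact ⟨w, hw, hV'sub hwz⟩
  by_contra hcon
  push_neg at hcon
  set ι := {D : Set (X × X) // D ∈ uniformity X} with hι
  haveI : Nonempty ι := ⟨⟨Set.univ, univ_mem⟩⟩
  set K : ι → Set X := fun D => closure ({z | DChain f D.1 z z} \ U) with hK
  have hdir : Directed (· ⊇ ·) K := by
    intro D₁ D₂
    refine ⟨⟨D₁.1 ∩ D₂.1, inter_mem D₁.2 D₂.2⟩, ?_, ?_⟩ <;>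
      exact closure_mono fun z hz =>
        ⟨dchain_mono (by intro p hp; first | exact hp.1 | exact hp.2) hz.1, hz.2⟩
  have hne : ∀ D : ι, (K D).Nonempty := by
    intro D
    obtain ⟨z, hz1, hz2⟩ := hcon D.1 D.2
    exact ⟨z, subset_closure ⟨hz1, hz2⟩⟩
  have hcl : ∀ D : ι, IsClosed (K D) := fun D => isClosed_closure
  have hcpt : ∀ D : ι, IsCompact (K D) := fun D => (hcl D).isCompact
  obtain ⟨z, hz⟩ :=
    IsCompact.nonempty_iInter_of_directed_nonempty_isCompact_isClosed K hdir hne hcpt hcl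
  simp only [Set.mem_iInter] at hz
  have hznotU : z ∉ U := by
    have := hz ⟨Set.univ, univ_mem⟩
    have hsub : K ⟨Set.univ, univ_mem⟩ ⊆ Uᶜ := by
      rw [hK]
      exact closure_minimal (fun w hw => hw.2) (isClosed_compl_iff.2 hUopen)
    exact hsub this
  have hzCR : z ∈ CR f := by
    intro Dt hDt
    obtain ⟨T, hT, hTsymm, hTsub⟩ := comp_comp_symm_mem_uniformity_sets hDt
    have hpre : {p : X × X | (f p.1, f p.2) ∈ T} ∈ uniformity X := by
      have := ufc hT
      rwa [Filter.mem_map] at this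
    set W : Set (X × X) := SetRel.symmetrize (T ∩ {p : X × X | (f p.1, f p.2) ∈ T}) with hW
    have hWmem : W ∈ uniformity X := symmetrize_mem_uniformity (inter_mem hT hpre)
    have hWsymm : SetRel.IsSymm W := SetRel.isSymm_symmetrize
    have hzK := hz ⟨T, hT⟩
    obtain ⟨z', hz'ball, hz'set⟩ :=
      mem_closure_iff_nhds.1 hzK (UniformSpace.ball z W) (UniformSpace.ball_mem_nhds z hWmem)
    have hza : (z, z') ∈ W := hz'ball
    have hbz : (z', z) ∈ W := hWsymm.symm _ _ hza
    have hchain := dchain_replace_ends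
      (W := W) (W₂ := T) (D' := T)
      (fun a b hab => (SetRel.symmetrize_subset_self hab).2)
      (fun a => refl_mem_uniformity hWmem) (fun a => refl_mem_uniformity hT)
      hza hbz hz'set.1
    refine dchain_mono ?_ hchain
    intro p hp
    apply hTsub
    rw [SetRel.comp_assoc]
    exact SetRel.comp_subset_comp (le_refl T) (SetRel.comp_subset_comp (le_refl T)
      (fun q hq => (SetRel.symmetrize_subset_self hq).1)) hp
  exact hznotU ⟨z, hzCR, refl_mem_uniformity hV'mem⟩

lemma lemmaB {f : X → X} (hf : Continuous f) :
    ∀ E ∈ uniformity X, ∀ z ∈ CR f, ∃ w ∈ CR f, (f w, z) ∈ E := by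
  intro E hE z hz
  have ufc : UniformContinuous f := CompactSpace.uniformContinuous_of_continuous hf
  obtain ⟨T, hT, hTsymm, hTsub⟩ := comp_symm_mem_uniformity_sets hE
  have hpre : {p : X × X | (f p.1, f p.2) ∈ T} ∈ uniformity X := by
    have := ufc hT
    rwa [Filter.mem_map] at this
  obtain ⟨D₀, hD₀, hD₀prop⟩ := lemmaC hf _ hpre
  obtain ⟨p, hp, hfp⟩ := dchain_penultimate (hz _ (inter_mem hD₀ hT))
  obtain ⟨w, hw, hwp⟩ := hD₀prop p (dchain_mono Set.inter_subset_left hp)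
  exact ⟨w, hw, hTsub (SetRel.mem_comp.2 ⟨f p, hwp, hfp.2⟩)⟩

end Compactness

/-- every D-pseudo orbit is eventually E-approximated by an E-pseudo orbit
contained in CR(f). -/
theorem pseudoOrbit_eventually_approx_in_CR
    {X : Type*} [UniformSpace X] [CompactSpace X]
    (f : X → X) (hf : Continuous f) (hsurj : Function.Surjective f) :
    ∀ E ∈ uniformity X, ∃ D ∈ uniformity X,
      ∀ x : ℕ → X, PseudoOrbitOn f D x Set.univ →
        ∃ y : ℕ → X, (∀ i : ℕ, y i ∈ CR f) ∧ PseudoOrbitOn f E y Set.univ ∧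
          ∃ N : ℕ, 0 < N ∧ ∀ i : ℕ, N ≤ i → (x i, y i) ∈ E := by
  intro E hE
  have ufc : UniformContinuous f := CompactSpace.uniformContinuous_of_continuous hf
  obtain ⟨E₁, hE₁, hE₁symm, hE₁sub⟩ := comp_comp_symm_mem_uniformity_sets hE
  have hE₁subE : E₁ ⊆ E := by
    intro p hp
    apply hE₁sub
    exact SetRel.mem_comp.2 ⟨p.2, SetRel.mem_comp.2 ⟨p.2, hp, refl_mem_uniformity hE₁⟩,
      refl_mem_uniformity hE₁⟩
  have hpreE₁ : {p : X × X | (f p.1, f p.2) ∈ E₁} ∈ uniformity X := by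
    have := ufc hE₁; rwa [Filter.mem_map] at this
  set E' : Set (X × X) := SetRel.symmetrize (E₁ ∩ {p : X × X | (f p.1, f p.2) ∈ E₁}) with hE'def
  have hE'mem : E' ∈ uniformity X := symmetrize_mem_uniformity (inter_mem hE₁ hpreE₁)
  have hE'symm : SetRel.IsSymm E' := SetRel.isSymm_symmetrize
  have hE'subE₁ : E' ⊆ E₁ := fun p hp => (SetRel.symmetrize_subset_self hp).1
  have hE'f : ∀ a b : X, (a, b) ∈ E' → (f a, f b) ∈ E₁ :=
    fun a b hp => (SetRel.symmetrize_subset_self hp).2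
  obtain ⟨Wb, hWb, hWbsymm, hWbsub⟩ := comp_symm_mem_uniformity_sets hE'mem
  obtain ⟨D₀, hD₀, hD₀prop⟩ := lemmaC hf Wb hWb
  obtain ⟨T, hT, hTsymm, hTsub⟩ := comp_comp_symm_mem_uniformity_sets hD₀
  have hpreT : {p : X × X | (f p.1, f p.2) ∈ T} ∈ uniformity X := by
    have := ufc hT; rwa [Filter.mem_map] at this
  set W : Set (X × X) := SetRel.symmetrize (T ∩ Wb ∩ {p : X × X | (f p.1, f p.2) ∈ T}) with hWdef
  have hWmem : W ∈ uniformity X := symmetrize_mem_uniformity (inter_mem (inter_mem hT hWb) hpreT)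
  have hWsymm : SetRel.IsSymm W := SetRel.isSymm_symmetrize
  have hWsubT : W ⊆ T := fun p hp => (SetRel.symmetrize_subset_self hp).1.1
  have hWsubWb : W ⊆ Wb := fun p hp => (SetRel.symmetrize_subset_self hp).1.2
  have hWf : ∀ a b : X, (a, b) ∈ W → (f a, f b) ∈ T :=
    fun a b hp => (SetRel.symmetrize_subset_self hp).2
  refine ⟨T ∩ E₁, inter_mem hT hE₁, ?_⟩
  intro x hx
  haveI : Nonempty X := ⟨x 0⟩
  -- key tail claim
  have key : ∃ N₀ : ℕ, ∀ i, N₀ ≤ i → ∃ w ∈ CR f, (x i, w) ∈ E' := by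
    by_contra hcon
    push_neg at hcon
    set Bad : Set ℕ := {i | ¬ ∃ w ∈ CR f, (x i, w) ∈ E'} with hBad
    have hfreqBad : ∃ᶠ i in atTop, i ∈ Bad := by
      rw [frequently_atTop]
      intro a
      obtain ⟨i, hi1, hi2⟩ := hcon a
      refine ⟨i, hi1, ?_⟩
      rw [hBad]
      simp only [Set.mem_setOf_eq]
      push_neg
      exact hi2
    haveI hG : (atTop ⊓ 𝓟 Bad).NeBot := frequently_mem_iff_neBot.1 hfreqBad
    obtain ⟨z, hzcl⟩ := exists_clusterPt_of_compactSpace (map x (atTop ⊓ 𝓟 Bad))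
    have hfreq : ∀ n : ℕ, ∃ i, n ≤ i ∧ i ∈ Bad ∧ (z, x i) ∈ W := by
      intro n
      have h1 : ∃ᶠ a in atTop ⊓ 𝓟 Bad, x a ∈ UniformSpace.ball z W := by
        have := (mapClusterPt_iff_frequently.1 hzcl) (UniformSpace.ball z W)
          (UniformSpace.ball_mem_nhds z hWmem)
        exact this
      have h2 : ∃ᶠ a in atTop, a ∈ Bad ∧ x a ∈ UniformSpace.ball z W :=
        frequently_inf_principal.1 h1
      obtain ⟨i, hi, hiB, hiW⟩ := frequently_atTop.1 h2 n
      exact ⟨i, hi, hiB, hiW⟩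
    obtain ⟨i, -, hiBad, hiW⟩ := hfreq 0
    obtain ⟨j, hj, -, hjW⟩ := hfreq (i + 1)
    have hchain := dchain_replace_ends (W := W) (W₂ := T) (D' := T ∩ E₁)
      hWf (fun a => refl_mem_uniformity hWmem) (fun a => refl_mem_uniformity hT)
      hiW (hWsymm.symm _ _ hjW) (pseudo_dchain hx (by omega : i < j))
    have hzD₀ : DChain f D₀ z z := by
      refine dchain_mono ?_ hchain
      intro p hp
      apply hTsub
      rw [SetRel.comp_assoc]
      exact SetRel.comp_subset_comp (le_refl T)
        (SetRel.comp_subset_comp Set.inter_subset_left hWsubT) hp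
    obtain ⟨w, hw, hwz⟩ := hD₀prop z hzD₀
    apply hiBad
    refine ⟨w, hw, hWbsub (SetRel.mem_comp.2 ⟨z, hWsubWb (hWsymm.symm _ _ hiW),
      hWbsymm.symm _ _ hwz⟩)⟩
  obtain ⟨N₀, hN₀⟩ := key
  set N : ℕ := max N₀ 1 with hNdef
  have hNpos : 0 < N := lt_of_lt_of_le zero_lt_one (le_max_right _ _)
  have hgood : ∀ i, N ≤ i → ∃ w ∈ CR f, (x i, w) ∈ E' :=
    fun i hi => hN₀ i (le_trans (le_max_left _ _) hi)
  -- choice of approximating CR points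
  have hgex : ∀ i : ℕ, ∃ w : X, N ≤ i → (w ∈ CR f ∧ (x i, w) ∈ E') := by
    intro i
    by_cases hi : N ≤ i
    · obtain ⟨w, hw1, hw2⟩ := hgood i hi
      exact ⟨w, fun _ => ⟨hw1, hw2⟩⟩
    · exact ⟨x i, fun h => absurd h hi⟩
  choose g hg using hgex
  -- backward extension within CR f
  have hpreex : ∀ z : X, ∃ w : X, z ∈ CR f → (w ∈ CR f ∧ (f w, z) ∈ E) := by
    intro z
    by_cases hz : z ∈ CR f
    · obtain ⟨w, hw1, hw2⟩ := lemmaB hf E hE z hz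
      exact ⟨w, fun _ => ⟨hw1, hw2⟩⟩
    · exact ⟨z, fun h => absurd h hz⟩
  choose pre hpre using hpreex
  have hgN : g N ∈ CR f := (hg N le_rfl).1
  have hiterCR : ∀ k : ℕ, pre^[k] (g N) ∈ CR f := by
    intro k
    induction k with
    | zero => simpa using hgN
    | succ k ih =>
      rw [Function.iterate_succ_apply']
      exact (hpre _ ih).1
  set y : ℕ → X := fun i => if N ≤ i then g i else pre^[N - i] (g N) with hydef
  have hyCR : ∀ i, y i ∈ CR f := by
    intro i
    by_cases hi : N ≤ i
    · simp only [hydef, if_pos hi]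
      exact (hg i hi).1
    · simp only [hydef, if_neg hi]
      exact hiterCR _
  have hyPseudo : PseudoOrbitOn f E y Set.univ := by
    intro i _
    by_cases hi : N ≤ i
    · have hi1 : N ≤ i + 1 := le_trans hi (Nat.le_succ _)
      simp only [hydef, if_pos hi, if_pos hi1]
      apply hE₁sub
      refine SetRel.mem_comp.2 ⟨x (i + 1), SetRel.mem_comp.2 ⟨f (x i), ?_, ?_⟩, ?_⟩
      · exact hE'f _ _ (hE'symm.symm _ _ (hg i hi).2)
      · exact (hx i (Set.mem_univ _)).2
      · exact hE'subE₁ (hg (i + 1) hi1).2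
    · by_cases hi1 : N ≤ i + 1
      · have hNi : N = i + 1 := by omega
        have hsub : N - i = 1 := by omega
        simp only [hydef, if_neg hi, if_pos hi1, hsub, Function.iterate_one]
        rw [← hNi]
        exact (hpre (g N) hgN).2
      · have hsub : N - i = (N - (i + 1)) + 1 := by omega
        simp only [hydef, if_neg hi, if_neg hi1, hsub, Function.iterate_succ_apply']
        exact (hpre _ (hiterCR (N - (i + 1)))).2
  refine ⟨y, hyCR, hyPseudo, N, hNpos, ?_⟩
  intro i hi
  simp only [hydef, if_pos hi]
  exact hE₁subE (hE'subE₁ (hg i hi).2)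
end
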